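/- Let X and Y be non-empty forests over an alphabet 𝒳 and let c be a cost function over 𝒳 that is non-negative, self-equal, and conforms to the triangular inequality. Then for all valid pre-order indices i of X and j of Y, the tree edit distance between the subtrees x̄_i and ȳ_j satisfies: d_c(x̄_i, ȳ_j) = min { c(x_i, −) + D_c(X[i+1, rl_X(i)], Y[j, rl_Y(j)]); c(−, y_j) + D_c(X[i, rl_X(i)], Y[j+1, rl_Y(j)]); c(x_i, y_j) + D_c(X[i+1, rl_X(i)], Y[j+1, rl_Y(j)]) }. -/
import Mathlib


namespace TED

/-- A tree over an alphabet `α`: a label together with a (possibly empty) list of children. -/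
inductive PTree (α : Type) where
  | node : α → List (PTree α) → PTree α

/-- A forest over `α` is a finite list of trees; `[]` is the empty forest `ε`. -/
abbrev Forest (α : Type) := List (PTree α)

namespace PTree

/-- The label of (the root of) a tree. -/
def label {α : Type} : PTree α → α
  | node a _ => a

/-- The children of (the root of) a tree. -/
def children {α : Type} : PTree α → List (PTree α)
  | node _ cs => cs

mutual
  /-- The number of nodes of a tree. -/
  def size {α : Type} : PTree α → ℕ
    | node _ cs => 1 + sizeL cs
  /-- The number of nodes of a forest. -/
  def sizeL {α : Type} : List (PTree α) → ℕ
    | [] => 0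
    | t :: ts => size t + sizeL ts
end

mutual
  /-- The pre-order list of all subtrees of a tree. -/
  def subtreesT {α : Type} : PTree α → List (PTree α)
    | node a cs => node a cs :: subtreesL cs
  /-- The pre-order list of all subtrees of a forest. -/
  def subtreesL {α : Type} : List (PTree α) → List (PTree α)
    | [] => []
    | t :: ts => subtreesT t ++ subtreesL ts
end

end PTree

open PTree

/-- The pre-order `π(X)` of a forest: the list of all its subtrees. -/
def preorder {α : Type} (F : Forest α) : List (PTree α) := PTree.subtreesL F

/-- The size `|X|` of a forest: the length of its pre-order. -/
def fsize {α : Type} (F : Forest α) : ℕ := (preorder F).length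

/-- The `i`-th subtree `x̄_i` (1-indexed pre-order) of a forest, if it exists. -/
def treeAt {α : Type} (F : Forest α) (i : ℕ) : Option (PTree α) := (preorder F)[i - 1]?

/-- The label `x_i` of the `i`-th subtree, as an element of `𝒳 ∪ {−}`
(`none` plays the role of the gap symbol `−`). -/
def labelAt {α : Type} (F : Forest α) (i : ℕ) : Option α := (treeAt F i).map PTree.label

/-- The number of nodes of the `i`-th subtree `x̄_i`. -/
def sizeAt {α : Type} (F : Forest α) (i : ℕ) : ℕ := ((treeAt F i).map PTree.size).getD 0

/-- A cost function over `α`: a real-valued function on `(𝒳 ∪ {−}) × (𝒳 ∪ {−})`,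
where the gap symbol `−` is modelled by `none`. -/
abbrev Cost (α : Type) := Option α → Option α → ℝ

/-- `c` is non-negative. -/
def Nonneg {α : Type} (c : Cost α) : Prop := ∀ x y, 0 ≤ c x y
/-- `c` is self-equal. -/
def SelfEq {α : Type} (c : Cost α) : Prop := ∀ x, c x x = 0
/-- `c` is discernible. -/
def Discernible {α : Type} (c : Cost α) : Prop := ∀ x y, x ≠ y → 0 < c x y
/-- `c` is symmetric. -/
def Symm {α : Type} (c : Cost α) : Prop := ∀ x y, c x y = c y x
/-- `c` conforms to the triangular inequality. -/
def Triangle {α : Type} (c : Cost α) : Prop := ∀ x y z, c x z ≤ c x y + c y z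

/-- Deletion of the first root: its children are spliced into its place. -/
def delRoot {α : Type} : Forest α → Forest α
  | [] => []
  | PTree.node _ cs :: ts => cs ++ ts

/-- Replacement of the label of the first root by `y`. -/
def repRoot {α : Type} (y : α) : Forest α → Forest α
  | [] => []
  | PTree.node _ cs :: ts => PTree.node y cs :: ts

/-- Insertion of a new root labeled `y` at root level, adopting the trees
`l` to `r-1` of the forest as its children. -/
def insRoot {α : Type} (y : α) (l r : ℕ) (F : Forest α) : Forest α :=
  if r > F.length + 1 ∨ l > r ∨ l < 1 then F
  else if l = r then F.take (l - 1) ++ [PTree.node y []] ++ F.drop (l - 1)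
  else F.take (l - 1) ++ [PTree.node y ((F.drop (l - 1)).take (r - l))] ++ F.drop (r - 1)

/-- `del_i`: deletion of the node with pre-order index `i`. -/
def applyDel {α : Type} : ℕ → Forest α → Forest α
  | _, [] => []
  | i, PTree.node a cs :: ts =>
    if i < 1 then PTree.node a cs :: ts
    else if i = 1 then delRoot (PTree.node a cs :: ts)
    else if i ≤ size (PTree.node a cs) then PTree.node a (applyDel (i - 1) cs) :: ts
    else PTree.node a cs :: applyDel (i - size (PTree.node a cs)) ts
  termination_by _ F => sizeOf F

/-- `rep_{i,y}`: replacement of the label of the node with pre-order index `i` by `y`. -/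
def applyRep {α : Type} (y : α) : ℕ → Forest α → Forest α
  | _, [] => []
  | i, PTree.node a cs :: ts =>
    if i < 1 then PTree.node a cs :: ts
    else if i = 1 then repRoot y (PTree.node a cs :: ts)
    else if i ≤ size (PTree.node a cs) then PTree.node a (applyRep y (i - 1) cs) :: ts
    else PTree.node a cs :: applyRep y (i - size (PTree.node a cs)) ts
  termination_by _ F => sizeOf F

/-- `ins_{i,y,l,r}`: insertion of a node labeled `y` as a child of the node with
pre-order index `i` (at root level if `i = 0`), adopting that node's children
`l` through `r-1` as its children. -/
def applyIns {α : Type} (y : α) (l r : ℕ) : ℕ → Forest α → Forest α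
  | 0, F => insRoot y l r F
  | _ + 1, [] => []
  | i + 1, PTree.node a cs :: ts =>
    if i + 1 ≤ size (PTree.node a cs) then PTree.node a (applyIns y l r i cs) :: ts
    else PTree.node a cs :: applyIns y l r (i + 1 - size (PTree.node a cs)) ts
  termination_by _ F => sizeOf F

/-- The standard edits: deletions `del_i`, replacements `rep_{i,y}` and
insertions `ins_{i,y,l,r}`. -/
inductive Edit (α : Type) where
  | del (i : ℕ)
  | rep (i : ℕ) (y : α)
  | ins (i : ℕ) (y : α) (l r : ℕ)

/-- Application of a single edit to a forest. -/
def Edit.apply {α : Type} : Edit α → Forest α → Forest α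
  | .del i, F => applyDel i F
  | .rep i y, F => applyRep y i F
  | .ins i y l r, F => applyIns y l r i F

/-- Application of an edit script `δ̄ = δ₁,…,δ_T` to a forest (left to right). -/
def applyScript {α : Type} (δ : List (Edit α)) (F : Forest α) : Forest α :=
  δ.foldl (fun F e => e.apply F) F

open Classical in
/-- The cost of a single edit with respect to the forest it is applied to:
`0` if the edit leaves the forest unchanged, and otherwise `c(x_i, y)` for a
replacement, `c(x_i, −)` for a deletion and `c(−, y)` for an insertion. -/
noncomputable def editCost {α : Type} (c : Cost α) (e : Edit α) (F : Forest α) : ℝ :=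
  if e.apply F = F then 0
  else
    match e with
    | .del i => c (labelAt F i) none
    | .rep i y => c (labelAt F i) (some y)
    | .ins _ y _ _ => c none (some y)

/-- The cost `c(δ̄, X)` of an edit script: the sum of the costs of its edits,
each evaluated on the forest to which it is applied. -/
noncomputable def scriptCost {α : Type} (c : Cost α) : List (Edit α) → Forest α → ℝ
  | [], _ => 0
  | e :: es, F => editCost c e F + scriptCost c es (e.apply F)

/-- The (subforest) edit distance `D_c(F, G)`: the infimum of the costs of edit
scripts transforming `F` into `G`. -/
noncomputable def fdist {α : Type} (c : Cost α) (F G : Forest α) : ℝ :=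
  sInf { r : ℝ | ∃ δ : List (Edit α), applyScript δ F = G ∧ scriptCost c δ F = r }

/-- The generalized tree edit distance `d_c(x̄, ȳ)` between two trees. -/
noncomputable def ted {α : Type} (c : Cost α) (x y : PTree α) : ℝ := fdist c [x] [y]

mutual
  /-- The 1-indexed pre-order position of the rightmost leaf within a tree. -/
  def rlIdx {α : Type} : PTree α → ℕ
    | .node _ cs => rlGo 1 cs
  /-- Helper: the pre-order position of the rightmost leaf of the last tree of a
  forest, where `acc` pre-order positions precede the forest. -/
  def rlGo {α : Type} : ℕ → List (PTree α) → ℕ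
    | acc, [] => acc
    | acc, [t] => acc + rlIdx t
    | acc, t :: ts => rlGo (acc + size t) ts
end

/-- The outermost right leaf `rl_X(i)`: the pre-order index of the rightmost leaf
of the subtree `x̄_i`. -/
def rlAt {α : Type} (F : Forest α) (i : ℕ) : ℕ :=
  match treeAt F i with
  | some t => i + rlIdx t - 1
  | none => i

/-- Helper for the subforest extraction: keeps the nodes with pre-order indices
between `i` and `j` (preserving ancestral structure); `k` is the pre-order index
of the last node already visited. -/
def subAux {α : Type} : Forest α → ℕ → ℕ → ℕ → Forest α × ℕ
  | [], _, _, k => ([], k)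
  | PTree.node a cs :: ts, i, j, k =>
    if k + 1 > j then ([], k + 1)
    else if k + 1 ≥ i then
      let P := subAux cs i j (k + 1)
      let Q := subAux ts i j P.2
      (PTree.node a P.1 :: Q.1, Q.2)
    else
      let P := subAux cs i j (k + 1)
      let Q := subAux ts i j P.2
      (P.1 ++ Q.1, Q.2)
  termination_by F _ _ _ => sizeOf F

/-- The subforest `X[i, j]`: the restriction of `X` to the nodes with pre-order
indices `i, …, j`, preserving the ancestral structure among them. -/
def subforest {α : Type} (F : Forest α) (i j : ℕ) : Forest α := (subAux F i j 0).1

/-! ### Section 1: basic lemmas on sizes and preorders -/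

section Basics
variable {α : Type}
open PTree

theorem size_node (a : α) (cs : List (PTree α)) : size (PTree.node a cs) = 1 + sizeL cs := by
  rw [size]

theorem sizeL_nil : sizeL ([] : Forest α) = 0 := by rw [sizeL]

theorem sizeL_cons (t : PTree α) (ts : Forest α) : sizeL (t :: ts) = size t + sizeL ts := by
  rw [sizeL]

theorem size_pos (t : PTree α) : 1 ≤ size t := by
  cases t with | node a cs => rw [size_node]; omega

theorem sizeL_append (X Y : Forest α) : sizeL (X ++ Y) = sizeL X + sizeL Y := by
  induction X with
  | nil => simp [sizeL_nil]
  | cons t ts ih => simp only [List.cons_append, sizeL_cons, ih]; ring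

theorem subtreesL_nil : subtreesL ([] : Forest α) = [] := by rw [subtreesL]

theorem subtreesL_cons (t : PTree α) (ts : Forest α) :
    subtreesL (t :: ts) = subtreesT t ++ subtreesL ts := by rw [subtreesL]

theorem subtreesT_node (a : α) (cs : List (PTree α)) :
    subtreesT (PTree.node a cs) = PTree.node a cs :: subtreesL cs := by rw [subtreesT]

theorem subtreesL_append (X Y : Forest α) :
    subtreesL (X ++ Y) = subtreesL X ++ subtreesL Y := by
  induction X with
  | nil => simp [subtreesL_nil]
  | cons t ts ih => simp only [List.cons_append, subtreesL_cons, ih, List.append_assoc]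

theorem length_subtreesL : ∀ F : Forest α, (subtreesL F).length = sizeL F
  | [] => by simp [subtreesL_nil, sizeL_nil]
  | PTree.node a cs :: ts => by
      rw [subtreesL_cons, subtreesT_node, sizeL_cons, size_node]
      simp only [List.length_append, List.length_cons,
        length_subtreesL cs, length_subtreesL ts]
      omega
  termination_by F => sizeOf F

theorem length_subtreesT (t : PTree α) : (subtreesT t).length = size t := by
  cases t with
  | node a cs =>
    rw [subtreesT_node, size_node]
    simp [length_subtreesL]
    omega

theorem fsize_eq (F : Forest α) : fsize F = sizeL F := by
  rw [fsize, preorder, length_subtreesL]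

theorem treeAt_eq (F : Forest α) (i : ℕ) : treeAt F i = (subtreesL F)[i - 1]? := rfl

theorem treeAt_cons_shift (a : α) (cs : Forest α) (F : Forest α) (k : ℕ) (hk : 1 ≤ k)
    (hk2 : k ≤ sizeL cs) : treeAt (PTree.node a cs :: F) (k + 1) = treeAt cs k := by
  rw [treeAt_eq, treeAt_eq, subtreesL_cons, subtreesT_node]
  obtain ⟨k', rfl⟩ : ∃ k', k = k' + 1 := ⟨k - 1, by omega⟩
  have h1 : k' + 1 + 1 - 1 = k' + 1 := by omega
  rw [h1, List.cons_append, List.getElem?_cons_succ]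
  rw [List.getElem?_append_left (by rw [length_subtreesL]; omega)]
  congr 1

theorem treeAt_append_left (X Y : Forest α) (k : ℕ) (hk : 1 ≤ k) (hk2 : k ≤ sizeL X) :
    treeAt (X ++ Y) k = treeAt X k := by
  rw [treeAt_eq, treeAt_eq, subtreesL_append,
    List.getElem?_append_left (by rw [length_subtreesL]; omega)]

theorem treeAt_append_right (X Y : Forest α) (k : ℕ) (hk : 1 ≤ k) :
    treeAt (X ++ Y) (k + sizeL X) = treeAt Y k := by
  rw [treeAt_eq, treeAt_eq, subtreesL_append]
  have : k + sizeL X - 1 = (subtreesL X).length + (k - 1) := by rw [length_subtreesL]; omega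
  rw [this, List.getElem?_append_right (by omega)]
  congr 1
  omega

theorem labelAt_cons_shift (a : α) (cs : Forest α) (F : Forest α) (k : ℕ) (hk : 1 ≤ k)
    (hk2 : k ≤ sizeL cs) : labelAt (PTree.node a cs :: F) (k + 1) = labelAt cs k := by
  rw [labelAt, labelAt, treeAt_cons_shift a cs F k hk hk2]

theorem labelAt_append_left (X Y : Forest α) (k : ℕ) (hk : 1 ≤ k) (hk2 : k ≤ sizeL X) :
    labelAt (X ++ Y) k = labelAt X k := by
  rw [labelAt, labelAt, treeAt_append_left X Y k hk hk2]

theorem labelAt_append_right (X Y : Forest α) (k : ℕ) (hk : 1 ≤ k) :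
    labelAt (X ++ Y) (k + sizeL X) = labelAt Y k := by
  rw [labelAt, labelAt, treeAt_append_right X Y k hk]

theorem treeAt_one (t : PTree α) (F : Forest α) : treeAt (t :: F) 1 = some t := by
  cases t with
  | node a cs =>
    rw [treeAt_eq, subtreesL_cons, subtreesT_node]
    simp

theorem labelAt_one (t : PTree α) (F : Forest α) : labelAt (t :: F) 1 = some t.label := by
  rw [labelAt, treeAt_one]; rfl

theorem labelAt_one' (a : α) (cs F : Forest α) :
    labelAt (PTree.node a cs :: F) 1 = some a := labelAt_one _ _

end Basics

/-! ### Section 2: behavior of edit applications -/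

section EditLemmas
variable {α : Type}
open PTree

theorem applyDel_nil (i : ℕ) : applyDel i ([] : Forest α) = [] := by rw [applyDel]

theorem applyDel_cons (i : ℕ) (a : α) (cs ts : Forest α) :
    applyDel i (PTree.node a cs :: ts) =
      if i < 1 then PTree.node a cs :: ts
      else if i = 1 then delRoot (PTree.node a cs :: ts)
      else if i ≤ size (PTree.node a cs) then PTree.node a (applyDel (i - 1) cs) :: ts
      else PTree.node a cs :: applyDel (i - size (PTree.node a cs)) ts := by
  rw [applyDel]

theorem applyRep_nil (y : α) (i : ℕ) : applyRep y i ([] : Forest α) = [] := by rw [applyRep]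

theorem applyRep_cons (y : α) (i : ℕ) (a : α) (cs ts : Forest α) :
    applyRep y i (PTree.node a cs :: ts) =
      if i < 1 then PTree.node a cs :: ts
      else if i = 1 then repRoot y (PTree.node a cs :: ts)
      else if i ≤ size (PTree.node a cs) then PTree.node a (applyRep y (i - 1) cs) :: ts
      else PTree.node a cs :: applyRep y (i - size (PTree.node a cs)) ts := by
  rw [applyRep]

theorem applyIns_zero (y : α) (l r : ℕ) (F : Forest α) :
    applyIns y l r 0 F = insRoot y l r F := by rw [applyIns]

theorem applyIns_nil (y : α) (l r i : ℕ) (hi : 1 ≤ i) :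
    applyIns y l r i ([] : Forest α) = [] := by
  obtain ⟨i', rfl⟩ : ∃ i', i = i' + 1 := ⟨i - 1, by omega⟩
  rw [applyIns]

theorem applyIns_cons (y : α) (l r i : ℕ) (a : α) (cs ts : Forest α) :
    applyIns y l r (i + 1) (PTree.node a cs :: ts) =
      if i + 1 ≤ size (PTree.node a cs) then PTree.node a (applyIns y l r i cs) :: ts
      else PTree.node a cs :: applyIns y l r (i + 1 - size (PTree.node a cs)) ts := by
  rw [applyIns]

theorem applyDel_zero (F : Forest α) : applyDel 0 F = F := by
  cases F with
  | nil => exact applyDel_nil 0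
  | cons t ts =>
    cases t with
    | node a cs => rw [applyDel_cons, if_pos (by omega)]

theorem applyRep_zero (y : α) (F : Forest α) : applyRep y 0 F = F := by
  cases F with
  | nil => exact applyRep_nil y 0
  | cons t ts =>
    cases t with
    | node a cs => rw [applyRep_cons, if_pos (by omega)]

theorem applyDel_oob : ∀ (F : Forest α) (i : ℕ), sizeL F < i → applyDel i F = F
  | [], i, _ => applyDel_nil i
  | PTree.node a cs :: ts, i, h => by
      have hs := size_pos (PTree.node a cs)
      rw [sizeL_cons] at h
      rw [applyDel_cons, if_neg (by omega), if_neg (by omega), if_neg (by omega),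
        applyDel_oob ts (i - size (PTree.node a cs)) (by omega)]
  termination_by F _ => sizeOf F

theorem applyRep_oob : ∀ (F : Forest α) (y : α) (i : ℕ), sizeL F < i → applyRep y i F = F
  | [], y, i, _ => applyRep_nil y i
  | PTree.node a cs :: ts, y, i, h => by
      have hs := size_pos (PTree.node a cs)
      rw [sizeL_cons] at h
      rw [applyRep_cons, if_neg (by omega), if_neg (by omega), if_neg (by omega),
        applyRep_oob ts y (i - size (PTree.node a cs)) (by omega)]
  termination_by F _ _ => sizeOf F

theorem applyIns_oob : ∀ (F : Forest α) (y : α) (l r i : ℕ), 1 ≤ i → sizeL F < i →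
    applyIns y l r i F = F
  | [], y, l, r, i, hi, _ => applyIns_nil y l r i hi
  | PTree.node a cs :: ts, y, l, r, i, hi, h => by
      have hs := size_pos (PTree.node a cs)
      rw [sizeL_cons] at h
      obtain ⟨i', rfl⟩ : ∃ i', i = i' + 1 := ⟨i - 1, by omega⟩
      rw [applyIns_cons, if_neg (by omega),
        applyIns_oob ts y l r (i' + 1 - size (PTree.node a cs)) (by omega) (by omega)]
  termination_by F _ _ _ _ => sizeOf F

theorem applyDel_one (a : α) (cs ts : Forest α) :
    applyDel 1 (PTree.node a cs :: ts) = cs ++ ts := by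
  rw [applyDel_cons, if_neg (by omega), if_pos rfl]
  rfl

theorem applyRep_one (y a : α) (cs ts : Forest α) :
    applyRep y 1 (PTree.node a cs :: ts) = PTree.node y cs :: ts := by
  rw [applyRep_cons, if_neg (by omega), if_pos rfl]
  rfl

theorem applyDel_cons_inner (k : ℕ) (hk : 1 ≤ k) (a : α) (cs ts : Forest α)
    (hk2 : k ≤ sizeL cs) :
    applyDel (k + 1) (PTree.node a cs :: ts) = PTree.node a (applyDel k cs) :: ts := by
  rw [applyDel_cons, if_neg (by omega), if_neg (by omega),
    if_pos (by rw [size_node]; omega)]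
  simp

theorem applyRep_cons_inner (y : α) (k : ℕ) (hk : 1 ≤ k) (a : α) (cs ts : Forest α)
    (hk2 : k ≤ sizeL cs) :
    applyRep y (k + 1) (PTree.node a cs :: ts) = PTree.node a (applyRep y k cs) :: ts := by
  rw [applyRep_cons, if_neg (by omega), if_neg (by omega),
    if_pos (by rw [size_node]; omega)]
  simp

theorem applyIns_cons_inner (y : α) (l r k : ℕ) (hk : k ≤ sizeL cs) (a : α) (ts : Forest α) :
    applyIns y l r (k + 1) (PTree.node a cs :: ts) =
      PTree.node a (applyIns y l r k cs) :: ts := by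
  rw [applyIns_cons, if_pos (by rw [size_node]; omega)]

theorem applyDel_cons_skip (k : ℕ) (a : α) (cs ts : Forest α)
    (hk : size (PTree.node a cs) < k) :
    applyDel k (PTree.node a cs :: ts) =
      PTree.node a cs :: applyDel (k - size (PTree.node a cs)) ts := by
  have hs := size_pos (PTree.node a cs)
  rw [applyDel_cons, if_neg (by omega), if_neg (by omega), if_neg (by omega)]

theorem applyRep_cons_skip (y : α) (k : ℕ) (a : α) (cs ts : Forest α)
    (hk : size (PTree.node a cs) < k) :
    applyRep y k (PTree.node a cs :: ts) =
      PTree.node a cs :: applyRep y (k - size (PTree.node a cs)) ts := by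
  have hs := size_pos (PTree.node a cs)
  rw [applyRep_cons, if_neg (by omega), if_neg (by omega), if_neg (by omega)]

theorem applyIns_cons_skip (y : α) (l r k : ℕ) (a : α) (cs ts : Forest α)
    (hk : size (PTree.node a cs) < k) :
    applyIns y l r k (PTree.node a cs :: ts) =
      PTree.node a cs :: applyIns y l r (k - size (PTree.node a cs)) ts := by
  have hs := size_pos (PTree.node a cs)
  obtain ⟨i, rfl⟩ : ∃ i, k = i + 1 := ⟨k - 1, by omega⟩
  rw [applyIns_cons, if_neg (by omega)]

theorem applyDel_append_left : ∀ (X : Forest α) (Y : Forest α) (k : ℕ), 1 ≤ k →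
    k ≤ sizeL X → applyDel k (X ++ Y) = applyDel k X ++ Y
  | [], Y, k, hk, hk2 => by rw [sizeL_nil] at hk2; omega
  | PTree.node a cs :: X', Y, k, hk, hk2 => by
      have hsz : size (PTree.node a cs) = 1 + sizeL cs := size_node a cs
      rw [sizeL_cons] at hk2
      rw [List.cons_append]
      by_cases h1 : k = 1
      · subst h1
        rw [applyDel_one, applyDel_one, List.append_assoc]
      · by_cases h2 : k ≤ size (PTree.node a cs)
        · obtain ⟨k', rfl⟩ : ∃ k', k = k' + 1 := ⟨k - 1, by omega⟩
          rw [applyDel_cons_inner k' (by omega) a _ _ (by omega),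
            applyDel_cons_inner k' (by omega) a _ _ (by omega), List.cons_append]
        · rw [applyDel_cons_skip k a _ _ (by omega), applyDel_cons_skip k a _ _ (by omega),
            applyDel_append_left X' Y (k - size (PTree.node a cs)) (by omega) (by omega),
            List.cons_append]
  termination_by X _ _ => sizeOf X

theorem applyDel_append_right : ∀ (X : Forest α) (Y : Forest α) (k : ℕ), 1 ≤ k →
    applyDel (k + sizeL X) (X ++ Y) = X ++ applyDel k Y
  | [], Y, k, hk => by rw [sizeL_nil]; simp
  | PTree.node a cs :: X', Y, k, hk => by
      have hsz : size (PTree.node a cs) = 1 + sizeL cs := size_node a cs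
      rw [sizeL_cons, List.cons_append, applyDel_cons_skip _ a _ _ (by omega)]
      have h : k + (size (PTree.node a cs) + sizeL X') - size (PTree.node a cs) =
          k + sizeL X' := by omega
      rw [h, applyDel_append_right X' Y k hk, List.cons_append]
  termination_by X _ _ => sizeOf X

theorem applyRep_append_left : ∀ (X : Forest α) (Y : Forest α) (y : α) (k : ℕ), 1 ≤ k →
    k ≤ sizeL X → applyRep y k (X ++ Y) = applyRep y k X ++ Y
  | [], Y, y, k, hk, hk2 => by rw [sizeL_nil] at hk2; omega
  | PTree.node a cs :: X', Y, y, k, hk, hk2 => by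
      have hsz : size (PTree.node a cs) = 1 + sizeL cs := size_node a cs
      rw [sizeL_cons] at hk2
      rw [List.cons_append]
      by_cases h1 : k = 1
      · subst h1
        rw [applyRep_one, applyRep_one, List.cons_append]
      · by_cases h2 : k ≤ size (PTree.node a cs)
        · obtain ⟨k', rfl⟩ : ∃ k', k = k' + 1 := ⟨k - 1, by omega⟩
          rw [applyRep_cons_inner y k' (by omega) a _ _ (by omega),
            applyRep_cons_inner y k' (by omega) a _ _ (by omega), List.cons_append]
        · rw [applyRep_cons_skip y k a _ _ (by omega), applyRep_cons_skip y k a _ _ (by omega),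
            applyRep_append_left X' Y y (k - size (PTree.node a cs)) (by omega) (by omega),
            List.cons_append]
  termination_by X _ _ _ => sizeOf X

theorem applyRep_append_right : ∀ (X : Forest α) (Y : Forest α) (y : α) (k : ℕ), 1 ≤ k →
    applyRep y (k + sizeL X) (X ++ Y) = X ++ applyRep y k Y
  | [], Y, y, k, hk => by rw [sizeL_nil]; simp
  | PTree.node a cs :: X', Y, y, k, hk => by
      have hsz : size (PTree.node a cs) = 1 + sizeL cs := size_node a cs
      rw [sizeL_cons, List.cons_append, applyRep_cons_skip y _ a _ _ (by omega)]
      have h : k + (size (PTree.node a cs) + sizeL X') - size (PTree.node a cs) =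
          k + sizeL X' := by omega
      rw [h, applyRep_append_right X' Y y k hk, List.cons_append]
  termination_by X _ _ _ => sizeOf X

theorem applyIns_append_right : ∀ (X : Forest α) (Y : Forest α) (y : α) (l r k : ℕ), 1 ≤ k →
    applyIns y l r (k + sizeL X) (X ++ Y) = X ++ applyIns y l r k Y
  | [], Y, y, l, r, k, hk => by rw [sizeL_nil]; simp
  | PTree.node a cs :: X', Y, y, l, r, k, hk => by
      have hsz : size (PTree.node a cs) = 1 + sizeL cs := size_node a cs
      rw [sizeL_cons, List.cons_append, applyIns_cons_skip y l r _ a _ _ (by omega)]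
      have h : k + (size (PTree.node a cs) + sizeL X') - size (PTree.node a cs) =
          k + sizeL X' := by omega
      rw [h, applyIns_append_right X' Y y l r k hk, List.cons_append]
  termination_by X _ _ _ _ _ => sizeOf X

/-- Deleting the node at position `sizeL X + 1` of `X ++ node y cs :: Z` splices in `cs`. -/
theorem applyDel_join (X : Forest α) (y : α) (cs Z : Forest α) :
    applyDel (sizeL X + 1) (X ++ PTree.node y cs :: Z) = X ++ (cs ++ Z) := by
  rw [show sizeL X + 1 = 1 + sizeL X by omega, applyDel_append_right X _ 1 (by omega),
    applyDel_one]

theorem treeAt_join (X : Forest α) (y : α) (cs Z : Forest α) :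
    treeAt (X ++ PTree.node y cs :: Z) (sizeL X + 1) = some (PTree.node y cs) := by
  rw [show sizeL X + 1 = 1 + sizeL X by omega, treeAt_append_right X _ 1 (by omega), treeAt_one]

theorem labelAt_join (X : Forest α) (y : α) (cs Z : Forest α) :
    labelAt (X ++ PTree.node y cs :: Z) (sizeL X + 1) = some y := by
  rw [labelAt, treeAt_join]
  rfl

end EditLemmas

/-! ### Section 3: scripts, costs, and basic properties of `fdist` -/

section ScriptLemmas
variable {α : Type}
open PTree

theorem applyScript_nil (F : Forest α) : applyScript [] F = F := rfl

theorem applyScript_cons (e : Edit α) (δ : List (Edit α)) (F : Forest α) :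
    applyScript (e :: δ) F = applyScript δ (e.apply F) := rfl

theorem applyScript_append (δ₁ δ₂ : List (Edit α)) (F : Forest α) :
    applyScript (δ₁ ++ δ₂) F = applyScript δ₂ (applyScript δ₁ F) := by
  simp [applyScript, List.foldl_append]

theorem scriptCost_nil (c : Cost α) (F : Forest α) : scriptCost c [] F = 0 := by rw [scriptCost]

theorem scriptCost_cons (c : Cost α) (e : Edit α) (δ : List (Edit α)) (F : Forest α) :
    scriptCost c (e :: δ) F = editCost c e F + scriptCost c δ (e.apply F) := by rw [scriptCost]

theorem editCost_nonneg (c : Cost α) (hnn : Nonneg c) (e : Edit α) (F : Forest α) :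
    0 ≤ editCost c e F := by
  unfold editCost
  split_ifs with h
  · exact le_refl 0
  · cases e <;> exact hnn _ _

theorem editCost_noop (c : Cost α) (e : Edit α) (F : Forest α) (h : e.apply F = F) :
    editCost c e F = 0 := by
  unfold editCost
  rw [if_pos h]

theorem scriptCost_nonneg (c : Cost α) (hnn : Nonneg c) :
    ∀ (δ : List (Edit α)) (F : Forest α), 0 ≤ scriptCost c δ F
  | [], F => le_of_eq (scriptCost_nil c F).symm
  | e :: δ, F => by
      rw [scriptCost_cons]
      have h1 := editCost_nonneg c hnn e F
      have h2 := scriptCost_nonneg c hnn δ (e.apply F)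
      linarith

theorem scriptCost_append (c : Cost α) :
    ∀ (δ₁ δ₂ : List (Edit α)) (F : Forest α),
      scriptCost c (δ₁ ++ δ₂) F = scriptCost c δ₁ F + scriptCost c δ₂ (applyScript δ₁ F)
  | [], δ₂, F => by rw [List.nil_append, scriptCost_nil, applyScript_nil]; ring
  | e :: δ₁, δ₂, F => by
      rw [List.cons_append, scriptCost_cons, scriptCost_cons,
        scriptCost_append c δ₁ δ₂ (e.apply F), applyScript_cons]
      ring

theorem insRoot_build (y : α) (cs Z : Forest α) :
    insRoot y 1 (cs.length + 1) (cs ++ Z) = PTree.node y cs :: Z := by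
  unfold insRoot
  rw [if_neg (by simp)]
  by_cases h : cs = []
  · subst h
    simp
  · rw [if_neg (by simp [List.length_eq_zero_iff]; exact h)]
    simp [List.take_left', List.drop_left']

theorem exists_script_to_nil : ∀ (F : Forest α), ∃ δ : List (Edit α), applyScript δ F = []
  | [] => ⟨[], rfl⟩
  | PTree.node a cs :: ts => by
      obtain ⟨δ, hδ⟩ := exists_script_to_nil (cs ++ ts)
      exact ⟨Edit.del 1 :: δ, by
        rw [applyScript_cons]
        show applyScript δ (applyDel 1 (PTree.node a cs :: ts)) = []
        rw [applyDel_one, hδ]⟩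
  termination_by F => sizeL F
  decreasing_by
    rw [sizeL_append, sizeL_cons, size_node]; omega

theorem exists_script_build : ∀ (G F : Forest α), ∃ δ : List (Edit α), applyScript δ F = G ++ F
  | [], F => ⟨[], rfl⟩
  | PTree.node a cs :: ts, F => by
      obtain ⟨δ₁, h₁⟩ := exists_script_build ts F
      obtain ⟨δ₂, h₂⟩ := exists_script_build cs (ts ++ F)
      refine ⟨δ₁ ++ δ₂ ++ [Edit.ins 0 a 1 (cs.length + 1)], ?_⟩
      rw [applyScript_append, applyScript_append, h₁, h₂]
      show (Edit.ins 0 a 1 (cs.length + 1)).apply (cs ++ (ts ++ F)) = _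
      show applyIns a 1 (cs.length + 1) 0 (cs ++ (ts ++ F)) = _
      rw [applyIns_zero, insRoot_build]
      rfl
  termination_by G _ => sizeL G
  decreasing_by
    · rw [sizeL_cons, size_node]; omega
    · rw [sizeL_cons, size_node]; omega

theorem exists_script (F G : Forest α) : ∃ δ : List (Edit α), applyScript δ F = G := by
  obtain ⟨δ₁, h₁⟩ := exists_script_to_nil F
  obtain ⟨δ₂, h₂⟩ := exists_script_build G []
  exact ⟨δ₁ ++ δ₂, by rw [applyScript_append, h₁, h₂, List.append_nil]⟩

theorem scriptSet_nonempty (c : Cost α) (F G : Forest α) :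
    {r : ℝ | ∃ δ : List (Edit α), applyScript δ F = G ∧ scriptCost c δ F = r}.Nonempty := by
  obtain ⟨δ, hδ⟩ := exists_script F G
  exact ⟨scriptCost c δ F, δ, hδ, rfl⟩

theorem scriptSet_bddBelow (c : Cost α) (hnn : Nonneg c) (F G : Forest α) :
    BddBelow {r : ℝ | ∃ δ : List (Edit α), applyScript δ F = G ∧ scriptCost c δ F = r} := by
  refine ⟨0, fun r hr => ?_⟩
  obtain ⟨δ, -, rfl⟩ := hr
  exact scriptCost_nonneg c hnn δ F

theorem fdist_le_cost (c : Cost α) (hnn : Nonneg c) {F G : Forest α} (δ : List (Edit α))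
    (h : applyScript δ F = G) : fdist c F G ≤ scriptCost c δ F :=
  csInf_le (scriptSet_bddBelow c hnn F G) ⟨δ, h, rfl⟩

theorem le_fdist (c : Cost α) {F G : Forest α} {r : ℝ}
    (h : ∀ δ : List (Edit α), applyScript δ F = G → r ≤ scriptCost c δ F) :
    r ≤ fdist c F G := by
  apply le_csInf (scriptSet_nonempty c F G)
  rintro b ⟨δ, hδ, rfl⟩
  exact h δ hδ

theorem fdist_nonneg (c : Cost α) (hnn : Nonneg c) (F G : Forest α) : 0 ≤ fdist c F G :=
  le_fdist c fun δ _ => scriptCost_nonneg c hnn δ F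

theorem fdist_le_edit_add (c : Cost α) (hnn : Nonneg c) (e : Edit α) (F G : Forest α) :
    fdist c F G ≤ editCost c e F + fdist c (e.apply F) G := by
  have h : fdist c F G - editCost c e F ≤ fdist c (e.apply F) G := by
    apply le_fdist
    intro δ hδ
    have h2 : fdist c F G ≤ scriptCost c (e :: δ) F :=
      fdist_le_cost c hnn (e :: δ) (by rw [applyScript_cons]; exact hδ)
    rw [scriptCost_cons] at h2
    linarith
  linarith

theorem fdist_add_edit (c : Cost α) (hnn : Nonneg c) (e : Edit α) {F H G : Forest α}
    (h : e.apply H = G) : fdist c F G ≤ fdist c F H + editCost c e H := by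
  have h' : fdist c F G - editCost c e H ≤ fdist c F H := by
    apply le_fdist
    intro δ hδ
    have h2 : fdist c F G ≤ scriptCost c (δ ++ [e]) F :=
      fdist_le_cost c hnn _ (by rw [applyScript_append, hδ, applyScript_cons, h, applyScript_nil])
    rw [scriptCost_append, scriptCost_cons, scriptCost_nil, hδ] at h2
    linarith
  linarith

theorem editCost_del_one (c : Cost α) (a : α) (cs ts : Forest α) :
    editCost c (Edit.del 1) (PTree.node a cs :: ts) = c (some a) none := by
  have hne : (Edit.del 1).apply (PTree.node a cs :: ts) ≠ PTree.node a cs :: ts := by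
    show applyDel 1 _ ≠ _
    rw [applyDel_one]
    intro h
    have := congrArg sizeL h
    rw [sizeL_append, sizeL_cons, size_node] at this
    omega
  unfold editCost
  rw [if_neg hne]
  show c (labelAt (PTree.node a cs :: ts) 1) none = c (some a) none
  rw [show labelAt (PTree.node a cs :: ts) 1 = some a from labelAt_one _ _]

theorem editCost_ins_build (c : Cost α) (b : α) (ds G : Forest α) :
    editCost c (Edit.ins 0 b 1 (ds.length + 1)) (ds ++ G) = c none (some b) := by
  have happ : (Edit.ins 0 b 1 (ds.length + 1)).apply (ds ++ G) = PTree.node b ds :: G := by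
    show applyIns b 1 (ds.length + 1) 0 (ds ++ G) = _
    rw [applyIns_zero, insRoot_build]
  have hne : (Edit.ins 0 b 1 (ds.length + 1)).apply (ds ++ G) ≠ ds ++ G := by
    rw [happ]
    intro h
    have := congrArg sizeL h
    rw [sizeL_append, sizeL_cons, size_node] at this
    omega
  unfold editCost
  rw [if_neg hne]

theorem editCost_rep_one (c : Cost α) (hse : SelfEq c) (b a : α) (cs ts : Forest α) :
    editCost c (Edit.rep 1 b) (PTree.node a cs :: ts) = c (some a) (some b) := by
  have happ : (Edit.rep 1 b).apply (PTree.node a cs :: ts) = PTree.node b cs :: ts := by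
    show applyRep b 1 _ = _
    rw [applyRep_one]
  by_cases hab : a = b
  · subst hab
    rw [editCost_noop c _ _ happ, hse]
  · unfold editCost
    rw [if_neg (by rw [happ]; simp; intro h; exact absurd h.symm hab)]
    show c (labelAt (PTree.node a cs :: ts) 1) (some b) = c (some a) (some b)
    rw [show labelAt (PTree.node a cs :: ts) 1 = some a from labelAt_one _ _]

theorem fdist_le_del (c : Cost α) (hnn : Nonneg c) (a : α) (cs F G : Forest α) :
    fdist c (PTree.node a cs :: F) G ≤ c (some a) none + fdist c (cs ++ F) G := by
  have h := fdist_le_edit_add c hnn (Edit.del 1) (PTree.node a cs :: F) G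
  rw [editCost_del_one] at h
  calc fdist c (PTree.node a cs :: F) G ≤ _ := h
    _ = c (some a) none + fdist c (cs ++ F) G := by
        congr 2
        show applyDel 1 _ = _
        rw [applyDel_one]

theorem fdist_le_ins (c : Cost α) (hnn : Nonneg c) (b : α) (ds F G : Forest α) :
    fdist c F (PTree.node b ds :: G) ≤ c none (some b) + fdist c F (ds ++ G) := by
  have h := fdist_add_edit c hnn (Edit.ins 0 b 1 (ds.length + 1))
    (F := F) (H := ds ++ G) (G := PTree.node b ds :: G) (by
      show applyIns b 1 (ds.length + 1) 0 (ds ++ G) = _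
      rw [applyIns_zero, insRoot_build])
  rw [editCost_ins_build] at h
  linarith

end ScriptLemmas

/-! ### Section 4: lifting and shifting scripts -/

section LiftShift
variable {α : Type}
open PTree

theorem eff_del {i : ℕ} {F : Forest α} (h : applyDel i F ≠ F) : 1 ≤ i ∧ i ≤ sizeL F := by
  constructor
  · by_contra h'
    have : i = 0 := by omega
    subst this
    exact h (applyDel_zero F)
  · by_contra h'
    push_neg at h'
    exact h (applyDel_oob F i h')

theorem eff_rep {y : α} {i : ℕ} {F : Forest α} (h : applyRep y i F ≠ F) :
    1 ≤ i ∧ i ≤ sizeL F := by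
  constructor
  · by_contra h'
    have : i = 0 := by omega
    subst this
    exact h (applyRep_zero y F)
  · by_contra h'
    push_neg at h'
    exact h (applyRep_oob F y i h')

theorem eff_ins {y : α} {l r i : ℕ} {F : Forest α} (h : applyIns y l r i F ≠ F) :
    i ≤ sizeL F := by
  by_contra h'
  push_neg at h'
  rcases Nat.eq_zero_or_pos i with h0 | h0
  · subst h0
    omega
  · exact h (applyIns_oob F y l r i h0 h')

theorem eff_insRoot {y : α} {l r : ℕ} {F : Forest α} (h : insRoot y l r F ≠ F) :
    1 ≤ l ∧ l ≤ r ∧ r ≤ F.length + 1 := by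
  by_contra h'
  apply h
  unfold insRoot
  rw [if_pos (by omega)]

/-- Lift an edit acting on the children of the first root to the whole forest. -/
def liftEdit : Edit α → Edit α
  | .del i => .del (i + 1)
  | .rep i y => .rep (i + 1) y
  | .ins i y l r => .ins (i + 1) y l r

theorem liftEdit_apply (e : Edit α) (a : α) (cs F : Forest α) (h : e.apply cs ≠ cs) :
    (liftEdit e).apply (PTree.node a cs :: F) = PTree.node a (e.apply cs) :: F := by
  cases e with
  | del i =>
    obtain ⟨h1, h2⟩ := eff_del (h : applyDel i cs ≠ cs)
    exact applyDel_cons_inner i h1 a cs F h2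
  | rep i y =>
    obtain ⟨h1, h2⟩ := eff_rep (h : applyRep y i cs ≠ cs)
    exact applyRep_cons_inner y i h1 a cs F h2
  | ins i y l r =>
    have h2 := eff_ins (h : applyIns y l r i cs ≠ cs)
    exact applyIns_cons_inner y l r i h2 a F

theorem liftEdit_cost (c : Cost α) (e : Edit α) (a : α) (cs F : Forest α)
    (h : e.apply cs ≠ cs) :
    editCost c (liftEdit e) (PTree.node a cs :: F) = editCost c e cs := by
  have hne : (liftEdit e).apply (PTree.node a cs :: F) ≠ PTree.node a cs :: F := by
    rw [liftEdit_apply e a cs F h]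
    intro h'
    apply h
    injection h' with h1 h2
    injection h1
  unfold editCost
  rw [if_neg hne, if_neg h]
  cases e with
  | del i =>
    obtain ⟨h1, h2⟩ := eff_del (h : applyDel i cs ≠ cs)
    show c (labelAt (PTree.node a cs :: F) (i + 1)) none = c (labelAt cs i) none
    rw [labelAt_cons_shift a cs F i h1 h2]
  | rep i y =>
    obtain ⟨h1, h2⟩ := eff_rep (h : applyRep y i cs ≠ cs)
    show c (labelAt (PTree.node a cs :: F) (i + 1)) (some y) = c (labelAt cs i) (some y)
    rw [labelAt_cons_shift a cs F i h1 h2]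
  | ins i y l r => rfl

/-- Shift an edit acting on a forest past one initial tree of size `k`. -/
def shiftEdit (k : ℕ) : Edit α → Edit α
  | .del i => .del (i + k)
  | .rep i y => .rep (i + k) y
  | .ins 0 y l r => .ins 0 y (l + 1) (r + 1)
  | .ins (i + 1) y l r => .ins (i + 1 + k) y l r

theorem insRoot_eq (y : α) (l : ℕ) (F : Forest α) (hl : 1 ≤ l) (hr : l ≤ F.length + 1) :
    insRoot y l l F = F.take (l - 1) ++ [PTree.node y []] ++ F.drop (l - 1) := by
  unfold insRoot
  rw [if_neg (by omega), if_pos rfl]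

theorem insRoot_lt (y : α) (l r : ℕ) (F : Forest α) (hl : 1 ≤ l) (hlr : l < r)
    (hr : r ≤ F.length + 1) :
    insRoot y l r F =
      F.take (l - 1) ++ [PTree.node y ((F.drop (l - 1)).take (r - l))] ++ F.drop (r - 1) := by
  unfold insRoot
  rw [if_neg (by omega), if_neg (by omega)]

theorem insRoot_shift (y : α) (l r : ℕ) (t : PTree α) (F : Forest α)
    (hl : 1 ≤ l) (hlr : l ≤ r) (hr : r ≤ F.length + 1) :
    insRoot y (l + 1) (r + 1) (t :: F) = t :: insRoot y l r F := by
  obtain ⟨l', rfl⟩ : ∃ l', l = l' + 1 := ⟨l - 1, by omega⟩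
  by_cases h : l' + 1 = r
  · subst h
    rw [insRoot_eq y (l' + 1) F hl hr,
      insRoot_eq y (l' + 1 + 1) (t :: F) (by omega) (by simp; omega)]
    simp [List.take_succ_cons, List.drop_succ_cons]
  · obtain ⟨r', rfl⟩ : ∃ r', r = r' + 1 := ⟨r - 1, by omega⟩
    rw [insRoot_lt y (l' + 1) (r' + 1) F hl (by omega) hr,
      insRoot_lt y (l' + 1 + 1) (r' + 1 + 1) (t :: F) (by omega) (by omega) (by simp; omega)]
    simp only [Nat.add_sub_cancel, List.take_succ_cons, List.drop_succ_cons, List.cons_append]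
    have h2 : r' + 1 + 1 - (l' + 1 + 1) = r' + 1 - (l' + 1) := by omega
    rw [h2]

theorem shiftEdit_apply (e : Edit α) (t : PTree α) (F : Forest α) (h : e.apply F ≠ F) :
    (shiftEdit (size t) e).apply (t :: F) = t :: e.apply F := by
  have hsz : sizeL [t] = size t := by rw [sizeL_cons, sizeL_nil]; omega
  cases e with
  | del i =>
    obtain ⟨h1, _⟩ := eff_del (h : applyDel i F ≠ F)
    show applyDel (i + size t) ([t] ++ F) = [t] ++ applyDel i F
    rw [← hsz, applyDel_append_right [t] F i h1]
  | rep i y =>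
    obtain ⟨h1, _⟩ := eff_rep (h : applyRep y i F ≠ F)
    show applyRep y (i + size t) ([t] ++ F) = [t] ++ applyRep y i F
    rw [← hsz, applyRep_append_right [t] F y i h1]
  | ins i y l r =>
    cases i with
    | zero =>
      have h' : insRoot y l r F ≠ F := by
        intro h''
        apply h
        show applyIns y l r 0 F = F
        rw [applyIns_zero, h'']
      obtain ⟨h1, h2, h3⟩ := eff_insRoot h'
      show applyIns y (l + 1) (r + 1) 0 (t :: F) = t :: applyIns y l r 0 F
      rw [applyIns_zero, applyIns_zero, insRoot_shift y l r t F h1 h2 h3]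
    | succ i =>
      show applyIns y l r (i + 1 + size t) ([t] ++ F) = [t] ++ applyIns y l r (i + 1) F
      rw [← hsz, applyIns_append_right [t] F y l r (i + 1) (by omega)]

theorem shiftEdit_cost (c : Cost α) (e : Edit α) (t : PTree α) (F : Forest α)
    (h : e.apply F ≠ F) :
    editCost c (shiftEdit (size t) e) (t :: F) = editCost c e F := by
  have hne : (shiftEdit (size t) e).apply (t :: F) ≠ t :: F := by
    rw [shiftEdit_apply e t F h]
    intro h'
    apply h
    injection h'
  have hsz : sizeL [t] = size t := by rw [sizeL_cons, sizeL_nil]; omega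
  unfold editCost
  rw [if_neg hne, if_neg h]
  cases e with
  | del i =>
    obtain ⟨h1, _⟩ := eff_del (h : applyDel i F ≠ F)
    show c (labelAt (t :: F) (i + size t)) none = c (labelAt F i) none
    rw [show (t :: F) = [t] ++ F from rfl, ← hsz, labelAt_append_right [t] F i h1]
  | rep i y =>
    obtain ⟨h1, _⟩ := eff_rep (h : applyRep y i F ≠ F)
    show c (labelAt (t :: F) (i + size t)) (some y) = c (labelAt F i) (some y)
    rw [show (t :: F) = [t] ++ F from rfl, ← hsz, labelAt_append_right [t] F i h1]
  | ins i y l r =>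
    cases i with
    | zero => rfl
    | succ i => rfl

theorem lift_script (c : Cost α) :
    ∀ (δ : List (Edit α)) (cs : Forest α) (a : α) (F : Forest α),
      ∃ δ' : List (Edit α),
        applyScript δ' (PTree.node a cs :: F) = PTree.node a (applyScript δ cs) :: F ∧
        scriptCost c δ' (PTree.node a cs :: F) = scriptCost c δ cs
  | [], cs, a, F => ⟨[], rfl, by rw [scriptCost_nil, scriptCost_nil]⟩
  | e :: δ, cs, a, F => by
    by_cases h : e.apply cs = cs
    · obtain ⟨δ', h1, h2⟩ := lift_script c δ cs a F
      refine ⟨δ', ?_, ?_⟩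
      · rw [h1, applyScript_cons, h]
      · rw [h2, scriptCost_cons, editCost_noop c e cs h, h]
        ring
    · obtain ⟨δ', h1, h2⟩ := lift_script c δ (e.apply cs) a F
      refine ⟨liftEdit e :: δ', ?_, ?_⟩
      · rw [applyScript_cons, liftEdit_apply e a cs F h, h1, applyScript_cons]
      · rw [scriptCost_cons, scriptCost_cons, liftEdit_cost c e a cs F h,
          liftEdit_apply e a cs F h, h2]

theorem shift_script (c : Cost α) :
    ∀ (δ : List (Edit α)) (F : Forest α) (t : PTree α),
      ∃ δ' : List (Edit α),
        applyScript δ' (t :: F) = t :: applyScript δ F ∧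
        scriptCost c δ' (t :: F) = scriptCost c δ F
  | [], F, t => ⟨[], rfl, by rw [scriptCost_nil, scriptCost_nil]⟩
  | e :: δ, F, t => by
    by_cases h : e.apply F = F
    · obtain ⟨δ', h1, h2⟩ := shift_script c δ F t
      refine ⟨δ', ?_, ?_⟩
      · rw [h1, applyScript_cons, h]
      · rw [h2, scriptCost_cons, editCost_noop c e F h, h]
        ring
    · obtain ⟨δ', h1, h2⟩ := shift_script c δ (e.apply F) t
      refine ⟨shiftEdit (size t) e :: δ', ?_, ?_⟩
      · rw [applyScript_cons, shiftEdit_apply e t F h, h1, applyScript_cons]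
      · rw [scriptCost_cons, scriptCost_cons, shiftEdit_cost c e t F h,
          shiftEdit_apply e t F h, h2]

theorem fdist_le_match (c : Cost α) (hnn : Nonneg c) (hse : SelfEq c) (a b : α)
    (cs ds F G : Forest α) :
    fdist c (PTree.node a cs :: F) (PTree.node b ds :: G) ≤
      c (some a) (some b) + fdist c cs ds + fdist c F G := by
  have key : ∀ δ₁ : List (Edit α), applyScript δ₁ cs = ds →
      ∀ δ₂ : List (Edit α), applyScript δ₂ F = G →
      fdist c (PTree.node a cs :: F) (PTree.node b ds :: G) ≤
        c (some a) (some b) + scriptCost c δ₁ cs + scriptCost c δ₂ F := by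
    intro δ₁ hδ₁ δ₂ hδ₂
    obtain ⟨δ₁', e1, c1⟩ := lift_script c δ₁ cs b F
    obtain ⟨δ₂', e2, c2⟩ := shift_script c δ₂ F (PTree.node b ds)
    have happ : applyScript (Edit.rep 1 b :: (δ₁' ++ δ₂')) (PTree.node a cs :: F) =
        PTree.node b ds :: G := by
      rw [applyScript_cons]
      show applyScript (δ₁' ++ δ₂') (applyRep b 1 (PTree.node a cs :: F)) = _
      rw [applyRep_one, applyScript_append, e1, hδ₁, e2, hδ₂]
    have hcost : scriptCost c (Edit.rep 1 b :: (δ₁' ++ δ₂')) (PTree.node a cs :: F) =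
        c (some a) (some b) + scriptCost c δ₁ cs + scriptCost c δ₂ F := by
      rw [scriptCost_cons, editCost_rep_one c hse b a cs F]
      have : (Edit.rep 1 b).apply (PTree.node a cs :: F) = PTree.node b cs :: F := by
        show applyRep b 1 _ = _
        rw [applyRep_one]
      rw [this, scriptCost_append, c1, e1, hδ₁, c2]
      ring
    have := fdist_le_cost c hnn _ happ
    rw [hcost] at this
    exact this
  have step1 : ∀ δ₁ : List (Edit α), applyScript δ₁ cs = ds →
      fdist c (PTree.node a cs :: F) (PTree.node b ds :: G) ≤
        c (some a) (some b) + scriptCost c δ₁ cs + fdist c F G := by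
    intro δ₁ hδ₁
    have h := le_fdist c (F := F) (G := G)
      (r := fdist c (PTree.node a cs :: F) (PTree.node b ds :: G)
        - c (some a) (some b) - scriptCost c δ₁ cs)
      (fun δ₂ hδ₂ => by have := key δ₁ hδ₁ δ₂ hδ₂; linarith)
    linarith
  have h := le_fdist c (F := cs) (G := ds)
    (r := fdist c (PTree.node a cs :: F) (PTree.node b ds :: G)
      - c (some a) (some b) - fdist c F G)
    (fun δ₁ hδ₁ => by have := step1 δ₁ hδ₁; linarith)
  linarith

end LiftShift

/-! ### Section 5: the dynamic-programming distance `dp` -/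

section DP
variable {α : Type}
open PTree

noncomputable def dp (c : Cost α) : Forest α → Forest α → ℝ
  | [], [] => 0
  | PTree.node a cs :: F, [] => c (some a) none + dp c (cs ++ F) []
  | [], PTree.node b ds :: G => c none (some b) + dp c [] (ds ++ G)
  | PTree.node a cs :: F, PTree.node b ds :: G =>
      min (c (some a) none + dp c (cs ++ F) (PTree.node b ds :: G))
        (min (c none (some b) + dp c (PTree.node a cs :: F) (ds ++ G))
          (c (some a) (some b) + dp c cs ds + dp c F G))
  termination_by F G => sizeL F + sizeL G
  decreasing_by
    all_goals simp only [sizeL_append, sizeL_cons, sizeL_nil, size_node]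
    all_goals omega

theorem dp_nil_nil (c : Cost α) : dp c [] [] = 0 := by rw [dp]

theorem dp_cons_nil (c : Cost α) (a : α) (cs F : Forest α) :
    dp c (PTree.node a cs :: F) [] = c (some a) none + dp c (cs ++ F) [] := by rw [dp]

theorem dp_nil_cons (c : Cost α) (b : α) (ds G : Forest α) :
    dp c [] (PTree.node b ds :: G) = c none (some b) + dp c [] (ds ++ G) := by rw [dp]

theorem dp_cons_cons (c : Cost α) (a b : α) (cs ds F G : Forest α) :
    dp c (PTree.node a cs :: F) (PTree.node b ds :: G) =
      min (c (some a) none + dp c (cs ++ F) (PTree.node b ds :: G))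
        (min (c none (some b) + dp c (PTree.node a cs :: F) (ds ++ G))
          (c (some a) (some b) + dp c cs ds + dp c F G)) := by rw [dp]

theorem dp_nonneg (c : Cost α) (hnn : Nonneg c) :
    ∀ F G : Forest α, 0 ≤ dp c F G
  | [], [] => le_of_eq (dp_nil_nil c).symm
  | PTree.node a cs :: F, [] => by
      rw [dp_cons_nil]
      have h1 := hnn (some a) none
      have h2 := dp_nonneg c hnn (cs ++ F) []
      linarith
  | [], PTree.node b ds :: G => by
      rw [dp_nil_cons]
      have h1 := hnn none (some b)
      have h2 := dp_nonneg c hnn [] (ds ++ G)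
      linarith
  | PTree.node a cs :: F, PTree.node b ds :: G => by
      rw [dp_cons_cons]
      have h1 := hnn (some a) none
      have h2 := dp_nonneg c hnn (cs ++ F) (PTree.node b ds :: G)
      have h3 := hnn none (some b)
      have h4 := dp_nonneg c hnn (PTree.node a cs :: F) (ds ++ G)
      have h5 := hnn (some a) (some b)
      have h6 := dp_nonneg c hnn cs ds
      have h7 := dp_nonneg c hnn F G
      apply le_min (by linarith) (le_min (by linarith) (by linarith))
  termination_by F G => sizeL F + sizeL G
  decreasing_by
    all_goals simp only [sizeL_append, sizeL_cons, sizeL_nil, size_node]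
    all_goals omega

theorem dp_le_del (c : Cost α) (a : α) (cs F G : Forest α) :
    dp c (PTree.node a cs :: F) G ≤ c (some a) none + dp c (cs ++ F) G := by
  cases G with
  | nil => exact le_of_eq (dp_cons_nil c a cs F)
  | cons s G' =>
    cases s with
    | node b ds => rw [dp_cons_cons]; exact min_le_left _ _

theorem dp_le_ins (c : Cost α) (b : α) (ds F G : Forest α) :
    dp c F (PTree.node b ds :: G) ≤ c none (some b) + dp c F (ds ++ G) := by
  cases F with
  | nil => exact le_of_eq (dp_nil_cons c b ds G)
  | cons t F' =>
    cases t with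
    | node a cs =>
      rw [dp_cons_cons]
      exact le_trans (min_le_right _ _) (min_le_left _ _)

theorem dp_le_match (c : Cost α) (a b : α) (cs ds F G : Forest α) :
    dp c (PTree.node a cs :: F) (PTree.node b ds :: G) ≤
      c (some a) (some b) + dp c cs ds + dp c F G := by
  rw [dp_cons_cons]
  exact le_trans (min_le_right _ _) (min_le_right _ _)

theorem dp_self (c : Cost α) (hnn : Nonneg c) (hse : SelfEq c) :
    ∀ F : Forest α, dp c F F = 0
  | [] => dp_nil_nil c
  | PTree.node a cs :: F => by
      apply le_antisymm
      · have h := dp_le_match c a a cs cs F F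
        rw [hse (some a), dp_self c hnn hse cs, dp_self c hnn hse F] at h
        linarith
      · exact dp_nonneg c hnn _ _
  termination_by F => sizeL F
  decreasing_by
    all_goals simp only [sizeL_cons, size_node]
    all_goals omega

theorem dp_split (c : Cost α) :
    ∀ A B C D : Forest α, dp c (A ++ B) (C ++ D) ≤ dp c A C + dp c B D
  | [], B, [], D => by rw [dp_nil_nil]; simp
  | [], B, PTree.node b ds :: C', D => by
      rw [dp_nil_cons, List.nil_append, List.cons_append]
      have h1 := dp_le_ins c b ds B (C' ++ D)
      have h2 := dp_split c [] B (ds ++ C') D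
      rw [List.nil_append, List.append_assoc] at h2
      linarith
  | PTree.node a cs :: A', B, [], D => by
      rw [dp_cons_nil, List.nil_append, List.cons_append]
      have h1 := dp_le_del c a cs (A' ++ B) D
      have h2 := dp_split c (cs ++ A') B [] D
      rw [List.nil_append, List.append_assoc] at h2
      linarith
  | PTree.node a cs :: A', B, PTree.node b ds :: C', D => by
      rw [List.cons_append, List.cons_append, dp_cons_cons c a b cs ds A' C']
      rcases min_cases (c (some a) none + dp c (cs ++ A') (PTree.node b ds :: C'))
        (min (c none (some b) + dp c (PTree.node a cs :: A') (ds ++ C'))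
          (c (some a) (some b) + dp c cs ds + dp c A' C')) with ⟨heq, -⟩ | ⟨heq, -⟩
      · rw [heq]
        have h1 := dp_le_del c a cs (A' ++ B) (PTree.node b ds :: (C' ++ D))
        have h2 := dp_split c (cs ++ A') B (PTree.node b ds :: C') D
        rw [List.append_assoc, List.cons_append] at h2
        linarith
      · rw [heq]
        rcases min_cases (c none (some b) + dp c (PTree.node a cs :: A') (ds ++ C'))
          (c (some a) (some b) + dp c cs ds + dp c A' C') with ⟨heq2, -⟩ | ⟨heq2, -⟩
        · rw [heq2]
          have h1 := dp_le_ins c b ds (PTree.node a cs :: (A' ++ B)) (C' ++ D)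
          have h2 := dp_split c (PTree.node a cs :: A') B (ds ++ C') D
          rw [List.append_assoc, List.cons_append] at h2
          linarith
        · rw [heq2]
          have h1 := dp_le_match c a b cs ds (A' ++ B) (C' ++ D)
          have h2 := dp_split c A' B C' D
          linarith
  termination_by A B C D => sizeL A + sizeL B + sizeL C + sizeL D
  decreasing_by
    all_goals simp only [sizeL_append, sizeL_cons, sizeL_nil, size_node]
    all_goals omega

end DP

/-! ### Section 6: one-step inequalities for `dp` -/

section DPStep
variable {α : Type}
open PTree

theorem dp_del_step (c : Cost α) (hnn : Nonneg c) :
    ∀ (F G : Forest α) (i : ℕ), dp c F G ≤ c (labelAt F i) none + dp c (applyDel i F) G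
  | F, G, i => by
    by_cases hop : applyDel i F = F
    · rw [hop]
      have := hnn (labelAt F i) none
      linarith
    · obtain ⟨hi1, hi2⟩ := eff_del hop
      match F, hi2 with
      | [], hi2 =>
        rw [sizeL_nil] at hi2
        omega
      | PTree.node a cs :: F', hi2 =>
        have hsz : size (PTree.node a cs) = 1 + sizeL cs := size_node a cs
        rw [sizeL_cons] at hi2
        by_cases hc1 : i = 1
        · subst hc1
          rw [applyDel_one, labelAt_one']
          exact dp_le_del c a cs F' G
        · by_cases hc2 : i ≤ size (PTree.node a cs)
          · obtain ⟨k, rfl⟩ : ∃ k, i = k + 1 := ⟨i - 1, by omega⟩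
            have hk1 : 1 ≤ k := by omega
            have hk2 : k ≤ sizeL cs := by omega
            rw [applyDel_cons_inner k hk1 a cs F' hk2, labelAt_cons_shift a cs F' k hk1 hk2]
            cases G with
            | nil =>
              rw [dp_cons_nil, dp_cons_nil]
              have ih := dp_del_step c hnn (cs ++ F') [] k
              rw [applyDel_append_left cs F' k hk1 hk2,
                labelAt_append_left cs F' k hk1 hk2] at ih
              linarith
            | cons s G' =>
              match s with
              | PTree.node b ds =>
                rw [dp_cons_cons c a b (applyDel k cs) ds F' G']
                rcases min_cases (c (some a) none + dp c (applyDel k cs ++ F') (PTree.node b ds :: G'))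
                  (min (c none (some b) + dp c (PTree.node a (applyDel k cs) :: F') (ds ++ G'))
                    (c (some a) (some b) + dp c (applyDel k cs) ds + dp c F' G')) with ⟨heq, -⟩ | ⟨heq, -⟩
                · rw [heq]
                  have h1 := dp_le_del c a cs F' (PTree.node b ds :: G')
                  have ih := dp_del_step c hnn (cs ++ F') (PTree.node b ds :: G') k
                  rw [applyDel_append_left cs F' k hk1 hk2,
                    labelAt_append_left cs F' k hk1 hk2] at ih
                  linarith
                · rw [heq]
                  rcases min_cases (c none (some b) + dp c (PTree.node a (applyDel k cs) :: F') (ds ++ G'))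
                    (c (some a) (some b) + dp c (applyDel k cs) ds + dp c F' G') with ⟨heq2, -⟩ | ⟨heq2, -⟩
                  · rw [heq2]
                    have h1 := dp_le_ins c b ds (PTree.node a cs :: F') G'
                    have ih := dp_del_step c hnn (PTree.node a cs :: F') (ds ++ G') (k + 1)
                    rw [applyDel_cons_inner k hk1 a cs F' hk2,
                      labelAt_cons_shift a cs F' k hk1 hk2] at ih
                    linarith
                  · rw [heq2]
                    have h1 := dp_le_match c a b cs ds F' G'
                    have ih := dp_del_step c hnn cs ds k
                    linarith
          · have hlt : size (PTree.node a cs) < i := by omega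
            obtain ⟨k, hk⟩ : ∃ k, k = i - size (PTree.node a cs) := ⟨_, rfl⟩
            have hk1 : 1 ≤ k := by omega
            have hXs : sizeL [PTree.node a cs] = size (PTree.node a cs) := by
              rw [sizeL_cons, sizeL_nil]; omega
            have hlab : labelAt (PTree.node a cs :: F') i = labelAt F' k := by
              have h := labelAt_append_right [PTree.node a cs] F' k hk1
              rw [hXs] at h
              rw [show i = k + size (PTree.node a cs) by omega]
              exact h
            have hdel : applyDel i (PTree.node a cs :: F') =
                PTree.node a cs :: applyDel k F' := by
              rw [applyDel_cons_skip i a cs F' hlt, ← hk]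
            rw [hdel, hlab]
            cases G with
            | nil =>
              rw [dp_cons_nil, dp_cons_nil]
              have ih := dp_del_step c hnn (cs ++ F') [] (k + sizeL cs)
              rw [applyDel_append_right cs F' k hk1,
                labelAt_append_right cs F' k hk1] at ih
              linarith
            | cons s G' =>
              match s with
              | PTree.node b ds =>
                rw [dp_cons_cons c a b cs ds (applyDel k F') G']
                rcases min_cases (c (some a) none + dp c (cs ++ applyDel k F') (PTree.node b ds :: G'))
                  (min (c none (some b) + dp c (PTree.node a cs :: applyDel k F') (ds ++ G'))
                    (c (some a) (some b) + dp c cs ds + dp c (applyDel k F') G')) with ⟨heq, -⟩ | ⟨heq, -⟩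
                · rw [heq]
                  have h1 := dp_le_del c a cs F' (PTree.node b ds :: G')
                  have ih := dp_del_step c hnn (cs ++ F') (PTree.node b ds :: G') (k + sizeL cs)
                  rw [applyDel_append_right cs F' k hk1,
                    labelAt_append_right cs F' k hk1] at ih
                  linarith
                · rw [heq]
                  rcases min_cases (c none (some b) + dp c (PTree.node a cs :: applyDel k F') (ds ++ G'))
                    (c (some a) (some b) + dp c cs ds + dp c (applyDel k F') G') with ⟨heq2, -⟩ | ⟨heq2, -⟩
                  · rw [heq2]
                    have h1 := dp_le_ins c b ds (PTree.node a cs :: F') G'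
                    have ih := dp_del_step c hnn (PTree.node a cs :: F') (ds ++ G') i
                    rw [hdel, hlab] at ih
                    linarith
                  · rw [heq2]
                    have h1 := dp_le_match c a b cs ds F' G'
                    have ih := dp_del_step c hnn F' G' k
                    linarith
  termination_by F G i => sizeL F + sizeL G
  decreasing_by
    all_goals simp only [sizeL_append, sizeL_cons, sizeL_nil, size_node]
    all_goals omega

theorem dp_rep_step (c : Cost α) (hnn : Nonneg c) (htr : Triangle c) :
    ∀ (F G : Forest α) (y : α) (i : ℕ),
      dp c F G ≤ c (labelAt F i) (some y) + dp c (applyRep y i F) G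
  | F, G, y, i => by
    by_cases hop : applyRep y i F = F
    · rw [hop]
      have := hnn (labelAt F i) (some y)
      linarith
    · obtain ⟨hi1, hi2⟩ := eff_rep hop
      match F, hi2 with
      | [], hi2 =>
        rw [sizeL_nil] at hi2
        omega
      | PTree.node a cs :: F', hi2 =>
        have hsz : size (PTree.node a cs) = 1 + sizeL cs := size_node a cs
        rw [sizeL_cons] at hi2
        by_cases hc1 : i = 1
        · subst hc1
          rw [applyRep_one, labelAt_one']
          cases G with
          | nil =>
            rw [dp_cons_nil, dp_cons_nil]
            have htr1 := htr (some a) (some y) none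
            linarith
          | cons s G' =>
            match s with
            | PTree.node b ds =>
              rw [dp_cons_cons c y b cs ds F' G']
              rcases min_cases (c (some y) none + dp c (cs ++ F') (PTree.node b ds :: G'))
                (min (c none (some b) + dp c (PTree.node y cs :: F') (ds ++ G'))
                  (c (some y) (some b) + dp c cs ds + dp c F' G')) with ⟨heq, -⟩ | ⟨heq, -⟩
              · rw [heq]
                have h1 := dp_le_del c a cs F' (PTree.node b ds :: G')
                have htr1 := htr (some a) (some y) none
                linarith
              · rw [heq]
                rcases min_cases (c none (some b) + dp c (PTree.node y cs :: F') (ds ++ G'))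
                  (c (some y) (some b) + dp c cs ds + dp c F' G') with ⟨heq2, -⟩ | ⟨heq2, -⟩
                · rw [heq2]
                  have h1 := dp_le_ins c b ds (PTree.node a cs :: F') G'
                  have ih := dp_rep_step c hnn htr (PTree.node a cs :: F') (ds ++ G') y 1
                  rw [applyRep_one, labelAt_one'] at ih
                  linarith
                · rw [heq2]
                  have h1 := dp_le_match c a b cs ds F' G'
                  have htr1 := htr (some a) (some y) (some b)
                  linarith
        · by_cases hc2 : i ≤ size (PTree.node a cs)
          · obtain ⟨k, rfl⟩ : ∃ k, i = k + 1 := ⟨i - 1, by omega⟩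
            have hk1 : 1 ≤ k := by omega
            have hk2 : k ≤ sizeL cs := by omega
            rw [applyRep_cons_inner y k hk1 a cs F' hk2, labelAt_cons_shift a cs F' k hk1 hk2]
            cases G with
            | nil =>
              rw [dp_cons_nil, dp_cons_nil]
              have ih := dp_rep_step c hnn htr (cs ++ F') [] y k
              rw [applyRep_append_left cs F' y k hk1 hk2,
                labelAt_append_left cs F' k hk1 hk2] at ih
              linarith
            | cons s G' =>
              match s with
              | PTree.node b ds =>
                rw [dp_cons_cons c a b (applyRep y k cs) ds F' G']
                rcases min_cases (c (some a) none + dp c (applyRep y k cs ++ F') (PTree.node b ds :: G'))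
                  (min (c none (some b) + dp c (PTree.node a (applyRep y k cs) :: F') (ds ++ G'))
                    (c (some a) (some b) + dp c (applyRep y k cs) ds + dp c F' G')) with ⟨heq, -⟩ | ⟨heq, -⟩
                · rw [heq]
                  have h1 := dp_le_del c a cs F' (PTree.node b ds :: G')
                  have ih := dp_rep_step c hnn htr (cs ++ F') (PTree.node b ds :: G') y k
                  rw [applyRep_append_left cs F' y k hk1 hk2,
                    labelAt_append_left cs F' k hk1 hk2] at ih
                  linarith
                · rw [heq]
                  rcases min_cases (c none (some b) + dp c (PTree.node a (applyRep y k cs) :: F') (ds ++ G'))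
                    (c (some a) (some b) + dp c (applyRep y k cs) ds + dp c F' G') with ⟨heq2, -⟩ | ⟨heq2, -⟩
                  · rw [heq2]
                    have h1 := dp_le_ins c b ds (PTree.node a cs :: F') G'
                    have ih := dp_rep_step c hnn htr (PTree.node a cs :: F') (ds ++ G') y (k + 1)
                    rw [applyRep_cons_inner y k hk1 a cs F' hk2,
                      labelAt_cons_shift a cs F' k hk1 hk2] at ih
                    linarith
                  · rw [heq2]
                    have h1 := dp_le_match c a b cs ds F' G'
                    have ih := dp_rep_step c hnn htr cs ds y k
                    linarith
          · have hlt : size (PTree.node a cs) < i := by omega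
            obtain ⟨k, hk⟩ : ∃ k, k = i - size (PTree.node a cs) := ⟨_, rfl⟩
            have hk1 : 1 ≤ k := by omega
            have hXs : sizeL [PTree.node a cs] = size (PTree.node a cs) := by
              rw [sizeL_cons, sizeL_nil]; omega
            have hlab : labelAt (PTree.node a cs :: F') i = labelAt F' k := by
              have h := labelAt_append_right [PTree.node a cs] F' k hk1
              rw [hXs] at h
              rw [show i = k + size (PTree.node a cs) by omega]
              exact h
            have hrep : applyRep y i (PTree.node a cs :: F') =
                PTree.node a cs :: applyRep y k F' := by
              rw [applyRep_cons_skip y i a cs F' hlt, ← hk]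
            rw [hrep, hlab]
            cases G with
            | nil =>
              rw [dp_cons_nil, dp_cons_nil]
              have ih := dp_rep_step c hnn htr (cs ++ F') [] y (k + sizeL cs)
              rw [applyRep_append_right cs F' y k hk1,
                labelAt_append_right cs F' k hk1] at ih
              linarith
            | cons s G' =>
              match s with
              | PTree.node b ds =>
                rw [dp_cons_cons c a b cs ds (applyRep y k F') G']
                rcases min_cases (c (some a) none + dp c (cs ++ applyRep y k F') (PTree.node b ds :: G'))
                  (min (c none (some b) + dp c (PTree.node a cs :: applyRep y k F') (ds ++ G'))
                    (c (some a) (some b) + dp c cs ds + dp c (applyRep y k F') G')) with ⟨heq, -⟩ | ⟨heq, -⟩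
                · rw [heq]
                  have h1 := dp_le_del c a cs F' (PTree.node b ds :: G')
                  have ih := dp_rep_step c hnn htr (cs ++ F') (PTree.node b ds :: G') y
                    (k + sizeL cs)
                  rw [applyRep_append_right cs F' y k hk1,
                    labelAt_append_right cs F' k hk1] at ih
                  linarith
                · rw [heq]
                  rcases min_cases (c none (some b) + dp c (PTree.node a cs :: applyRep y k F') (ds ++ G'))
                    (c (some a) (some b) + dp c cs ds + dp c (applyRep y k F') G') with ⟨heq2, -⟩ | ⟨heq2, -⟩
                  · rw [heq2]
                    have h1 := dp_le_ins c b ds (PTree.node a cs :: F') G'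
                    have ih := dp_rep_step c hnn htr (PTree.node a cs :: F') (ds ++ G') y i
                    rw [hrep, hlab] at ih
                    linarith
                  · rw [heq2]
                    have h1 := dp_le_match c a b cs ds F' G'
                    have ih := dp_rep_step c hnn htr F' G' y k
                    linarith
  termination_by F G y i => sizeL F + sizeL G
  decreasing_by
    all_goals simp only [sizeL_append, sizeL_cons, sizeL_nil, size_node]
    all_goals omega

theorem dp_insd_step (c : Cost α) (hnn : Nonneg c) (htr : Triangle c) :
    ∀ (H G : Forest α) (j : ℕ),
      dp c (applyDel j H) G ≤ c none (labelAt H j) + dp c H G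
  | H, G, j => by
    by_cases hop : applyDel j H = H
    · rw [hop]
      have := hnn none (labelAt H j)
      linarith
    · obtain ⟨hj1, hj2⟩ := eff_del hop
      match H, hj2 with
      | [], hj2 =>
        rw [sizeL_nil] at hj2
        omega
      | PTree.node a cs :: H', hj2 =>
        have hsz : size (PTree.node a cs) = 1 + sizeL cs := size_node a cs
        rw [sizeL_cons] at hj2
        by_cases hc1 : j = 1
        · subst hc1
          rw [applyDel_one, labelAt_one']
          cases G with
          | nil =>
            rw [dp_cons_nil]
            have h1 := hnn none (some a)
            have h2 := hnn (some a) none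
            linarith
          | cons s G' =>
            match s with
            | PTree.node b ds =>
              rw [dp_cons_cons c a b cs ds H' G']
              rcases min_cases (c (some a) none + dp c (cs ++ H') (PTree.node b ds :: G'))
                (min (c none (some b) + dp c (PTree.node a cs :: H') (ds ++ G'))
                  (c (some a) (some b) + dp c cs ds + dp c H' G')) with ⟨heq, -⟩ | ⟨heq, -⟩
              · rw [heq]
                have h1 := hnn none (some a)
                have h2 := hnn (some a) none
                linarith
              · rw [heq]
                rcases min_cases (c none (some b) + dp c (PTree.node a cs :: H') (ds ++ G'))
                  (c (some a) (some b) + dp c cs ds + dp c H' G') with ⟨heq2, -⟩ | ⟨heq2, -⟩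
                · rw [heq2]
                  have h1 := dp_le_ins c b ds (cs ++ H') G'
                  have ih := dp_insd_step c hnn htr (PTree.node a cs :: H') (ds ++ G') 1
                  rw [applyDel_one, labelAt_one'] at ih
                  linarith
                · rw [heq2]
                  have h1 := dp_le_ins c b ds (cs ++ H') G'
                  have h2 := dp_split c cs H' ds G'
                  have htr1 := htr none (some a) (some b)
                  linarith
        · by_cases hc2 : j ≤ size (PTree.node a cs)
          · obtain ⟨k, rfl⟩ : ∃ k, j = k + 1 := ⟨j - 1, by omega⟩
            have hk1 : 1 ≤ k := by omega
            have hk2 : k ≤ sizeL cs := by omega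
            rw [applyDel_cons_inner k hk1 a cs H' hk2, labelAt_cons_shift a cs H' k hk1 hk2]
            cases G with
            | nil =>
              rw [dp_cons_nil, dp_cons_nil]
              have ih := dp_insd_step c hnn htr (cs ++ H') [] k
              rw [applyDel_append_left cs H' k hk1 hk2,
                labelAt_append_left cs H' k hk1 hk2] at ih
              linarith
            | cons s G' =>
              match s with
              | PTree.node b ds =>
                rw [dp_cons_cons c a b cs ds H' G']
                rcases min_cases (c (some a) none + dp c (cs ++ H') (PTree.node b ds :: G'))
                  (min (c none (some b) + dp c (PTree.node a cs :: H') (ds ++ G'))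
                    (c (some a) (some b) + dp c cs ds + dp c H' G')) with ⟨heq, -⟩ | ⟨heq, -⟩
                · rw [heq]
                  have h1 := dp_le_del c a (applyDel k cs) H' (PTree.node b ds :: G')
                  have ih := dp_insd_step c hnn htr (cs ++ H') (PTree.node b ds :: G') k
                  rw [applyDel_append_left cs H' k hk1 hk2,
                    labelAt_append_left cs H' k hk1 hk2] at ih
                  linarith
                · rw [heq]
                  rcases min_cases (c none (some b) + dp c (PTree.node a cs :: H') (ds ++ G'))
                    (c (some a) (some b) + dp c cs ds + dp c H' G') with ⟨heq2, -⟩ | ⟨heq2, -⟩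
                  · rw [heq2]
                    have h1 := dp_le_ins c b ds (PTree.node a (applyDel k cs) :: H') G'
                    have ih := dp_insd_step c hnn htr (PTree.node a cs :: H') (ds ++ G') (k + 1)
                    rw [applyDel_cons_inner k hk1 a cs H' hk2,
                      labelAt_cons_shift a cs H' k hk1 hk2] at ih
                    linarith
                  · rw [heq2]
                    have h1 := dp_le_match c a b (applyDel k cs) ds H' G'
                    have ih := dp_insd_step c hnn htr cs ds k
                    linarith
          · have hlt : size (PTree.node a cs) < j := by omega
            obtain ⟨k, hk⟩ : ∃ k, k = j - size (PTree.node a cs) := ⟨_, rfl⟩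
            have hk1 : 1 ≤ k := by omega
            have hXs : sizeL [PTree.node a cs] = size (PTree.node a cs) := by
              rw [sizeL_cons, sizeL_nil]; omega
            have hlab : labelAt (PTree.node a cs :: H') j = labelAt H' k := by
              have h := labelAt_append_right [PTree.node a cs] H' k hk1
              rw [hXs] at h
              rw [show j = k + size (PTree.node a cs) by omega]
              exact h
            have hdel : applyDel j (PTree.node a cs :: H') =
                PTree.node a cs :: applyDel k H' := by
              rw [applyDel_cons_skip j a cs H' hlt, ← hk]
            rw [hdel, hlab]
            cases G with
            | nil =>
              rw [dp_cons_nil, dp_cons_nil]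
              have ih := dp_insd_step c hnn htr (cs ++ H') [] (k + sizeL cs)
              rw [applyDel_append_right cs H' k hk1,
                labelAt_append_right cs H' k hk1] at ih
              linarith
            | cons s G' =>
              match s with
              | PTree.node b ds =>
                rw [dp_cons_cons c a b cs ds H' G']
                rcases min_cases (c (some a) none + dp c (cs ++ H') (PTree.node b ds :: G'))
                  (min (c none (some b) + dp c (PTree.node a cs :: H') (ds ++ G'))
                    (c (some a) (some b) + dp c cs ds + dp c H' G')) with ⟨heq, -⟩ | ⟨heq, -⟩
                · rw [heq]
                  have h1 := dp_le_del c a cs (applyDel k H') (PTree.node b ds :: G')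
                  have ih := dp_insd_step c hnn htr (cs ++ H') (PTree.node b ds :: G')
                    (k + sizeL cs)
                  rw [applyDel_append_right cs H' k hk1,
                    labelAt_append_right cs H' k hk1] at ih
                  linarith
                · rw [heq]
                  rcases min_cases (c none (some b) + dp c (PTree.node a cs :: H') (ds ++ G'))
                    (c (some a) (some b) + dp c cs ds + dp c H' G') with ⟨heq2, -⟩ | ⟨heq2, -⟩
                  · rw [heq2]
                    have h1 := dp_le_ins c b ds (PTree.node a cs :: applyDel k H') G'
                    have ih := dp_insd_step c hnn htr (PTree.node a cs :: H') (ds ++ G') j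
                    rw [hdel, hlab] at ih
                    linarith
                  · rw [heq2]
                    have h1 := dp_le_match c a b cs ds (applyDel k H') G'
                    have ih := dp_insd_step c hnn htr H' G' k
                    linarith
  termination_by H G j => sizeL H + sizeL G
  decreasing_by
    all_goals simp only [sizeL_append, sizeL_cons, sizeL_nil, size_node]
    all_goals omega

theorem ins_inverse (y : α) (l r : ℕ) :
    ∀ (i : ℕ) (F : Forest α), applyIns y l r i F = F ∨
      ∃ j, 1 ≤ j ∧ applyDel j (applyIns y l r i F) = F ∧
        labelAt (applyIns y l r i F) j = some y ∧
        sizeL (applyIns y l r i F) = sizeL F + 1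
  | 0, F => by
    rw [applyIns_zero]
    by_cases hg : r > F.length + 1 ∨ l > r ∨ l < 1
    · left
      unfold insRoot
      rw [if_pos hg]
    · push_neg at hg
      obtain ⟨hr, hlr, hl⟩ := hg
      right
      by_cases hlr2 : l = r
      · subst hlr2
        rw [insRoot_eq y l F hl hr]
        rw [List.append_assoc, List.singleton_append]
        have hFsz : sizeL (F.take (l - 1)) + sizeL (F.drop (l - 1)) = sizeL F := by
          rw [← sizeL_append, List.take_append_drop]
        refine ⟨sizeL (F.take (l - 1)) + 1, by omega, ?_, ?_, ?_⟩
        · have h := applyDel_join (F.take (l - 1)) y [] (F.drop (l - 1))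
          rw [List.nil_append] at h
          rw [h, List.take_append_drop]
        · exact labelAt_join (F.take (l - 1)) y [] (F.drop (l - 1))
        · rw [sizeL_append, sizeL_cons, size_node, sizeL_nil]
          omega
      · rw [insRoot_lt y l r F hl (by omega) hr]
        rw [List.append_assoc, List.singleton_append]
        set X := F.take (l - 1) with hX
        set M := (F.drop (l - 1)).take (r - l) with hM
        set Z := F.drop (r - 1) with hZ
        have hdd : List.drop (r - l) (F.drop (l - 1)) = F.drop (r - 1) := by
          rw [List.drop_drop]
          congr 1
          omega
        have hMZ : M ++ Z = F.drop (l - 1) := by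
          rw [hM, hZ, ← hdd]
          exact List.take_append_drop _ _
        have hF : X ++ (M ++ Z) = F := by
          rw [hMZ, hX, List.take_append_drop]
        refine ⟨sizeL X + 1, by omega, ?_, ?_, ?_⟩
        · rw [applyDel_join X y M Z, hF]
        · exact labelAt_join X y M Z
        · have := congrArg sizeL hF
          rw [sizeL_append, sizeL_append] at this
          rw [sizeL_append, sizeL_cons, size_node]
          omega
  | i + 1, [] => Or.inl (applyIns_nil y l r (i + 1) (by omega))
  | i + 1, PTree.node a cs :: ts => by
    by_cases hc : i + 1 ≤ size (PTree.node a cs)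
    · rw [applyIns_cons, if_pos hc]
      rcases ins_inverse y l r i cs with hop | ⟨j, hj1, hdel, hlab, hsz⟩
      · left
        rw [hop]
      · right
        have hjb : j ≤ sizeL (applyIns y l r i cs) := by
          have hne : applyDel j (applyIns y l r i cs) ≠ applyIns y l r i cs := by
            rw [hdel]
            intro h
            rw [← h] at hsz
            omega
          exact (eff_del hne).2
        refine ⟨j + 1, by omega, ?_, ?_, ?_⟩
        · rw [applyDel_cons_inner j hj1 a _ ts hjb, hdel]
        · rw [labelAt_cons_shift a _ ts j hj1 hjb, hlab]
        · rw [sizeL_cons, sizeL_cons, size_node, size_node, hsz]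
          omega
    · rw [applyIns_cons, if_neg hc]
      rcases ins_inverse y l r (i + 1 - size (PTree.node a cs)) ts with hop | ⟨j, hj1, hdel, hlab, hsz⟩
      · left
        rw [hop]
      · right
        have hXs : sizeL [PTree.node a cs] = size (PTree.node a cs) := by
          rw [sizeL_cons, sizeL_nil]; omega
        have hs1 := size_pos (PTree.node a cs)
        refine ⟨j + size (PTree.node a cs), by omega, ?_, ?_, ?_⟩
        · have h := applyDel_append_right [PTree.node a cs]
            (applyIns y l r (i + 1 - size (PTree.node a cs)) ts) j hj1
          rw [hXs] at h
          rw [show (PTree.node a cs :: applyIns y l r (i + 1 - size (PTree.node a cs)) ts) =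
            [PTree.node a cs] ++ applyIns y l r (i + 1 - size (PTree.node a cs)) ts from rfl,
            h, hdel]
          rfl
        · have h := labelAt_append_right [PTree.node a cs]
            (applyIns y l r (i + 1 - size (PTree.node a cs)) ts) j hj1
          rw [hXs] at h
          rw [show (PTree.node a cs :: applyIns y l r (i + 1 - size (PTree.node a cs)) ts) =
            [PTree.node a cs] ++ applyIns y l r (i + 1 - size (PTree.node a cs)) ts from rfl,
            h, hlab]
        · rw [sizeL_cons, sizeL_cons, hsz]
          omega
  termination_by i F => sizeOf F

theorem dp_edit_step (c : Cost α) (hnn : Nonneg c) (htr : Triangle c) (e : Edit α)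
    (F G : Forest α) : dp c F G ≤ editCost c e F + dp c (e.apply F) G := by
  by_cases hop : e.apply F = F
  · rw [hop, editCost_noop c e F hop]
    linarith
  · cases e with
    | del i =>
      unfold editCost
      rw [if_neg hop]
      exact dp_del_step c hnn F G i
    | rep i y =>
      unfold editCost
      rw [if_neg hop]
      exact dp_rep_step c hnn htr F G y i
    | ins i y l r =>
      unfold editCost
      rw [if_neg hop]
      show dp c F G ≤ c none (some y) + dp c (applyIns y l r i F) G
      rcases ins_inverse y l r i F with hop' | ⟨j, _, hdel, hlab, _⟩
      · exact absurd hop' hop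
      · have h := dp_insd_step c hnn htr (applyIns y l r i F) G j
        rw [hdel, hlab] at h
        exact h

end DPStep

/-! ### Section 7: `fdist` equals `dp` -/

section Equality
variable {α : Type}
open PTree

theorem dp_le_scriptCost (c : Cost α) (hnn : Nonneg c) (hse : SelfEq c) (htr : Triangle c) :
    ∀ (δ : List (Edit α)) (F G : Forest α), applyScript δ F = G → dp c F G ≤ scriptCost c δ F
  | [], F, G, h => by
    rw [applyScript_nil] at h
    subst h
    rw [scriptCost_nil, dp_self c hnn hse]
  | e :: δ, F, G, h => by
    rw [applyScript_cons] at h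
    rw [scriptCost_cons]
    have h1 := dp_edit_step c hnn htr e F G
    have h2 := dp_le_scriptCost c hnn hse htr δ (e.apply F) G h
    linarith

theorem dp_le_fdist (c : Cost α) (hnn : Nonneg c) (hse : SelfEq c) (htr : Triangle c)
    (F G : Forest α) : dp c F G ≤ fdist c F G :=
  le_fdist c fun δ h => dp_le_scriptCost c hnn hse htr δ F G h

theorem fdist_le_dp (c : Cost α) (hnn : Nonneg c) (hse : SelfEq c) :
    ∀ F G : Forest α, fdist c F G ≤ dp c F G
  | [], [] => by
    have h := fdist_le_cost c hnn ([] : List (Edit α)) (applyScript_nil ([] : Forest α))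
    rw [scriptCost_nil] at h
    rw [dp_nil_nil]
    exact h
  | PTree.node a cs :: F, [] => by
    rw [dp_cons_nil]
    have h1 := fdist_le_del c hnn a cs F []
    have h2 := fdist_le_dp c hnn hse (cs ++ F) []
    linarith
  | [], PTree.node b ds :: G => by
    rw [dp_nil_cons]
    have h1 := fdist_le_ins c hnn b ds [] G
    have h2 := fdist_le_dp c hnn hse [] (ds ++ G)
    linarith
  | PTree.node a cs :: F, PTree.node b ds :: G => by
    rw [dp_cons_cons]
    refine le_min ?_ (le_min ?_ ?_)
    · have h1 := fdist_le_del c hnn a cs F (PTree.node b ds :: G)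
      have h2 := fdist_le_dp c hnn hse (cs ++ F) (PTree.node b ds :: G)
      linarith
    · have h1 := fdist_le_ins c hnn b ds (PTree.node a cs :: F) G
      have h2 := fdist_le_dp c hnn hse (PTree.node a cs :: F) (ds ++ G)
      linarith
    · have h1 := fdist_le_match c hnn hse a b cs ds F G
      have h2 := fdist_le_dp c hnn hse cs ds
      have h3 := fdist_le_dp c hnn hse F G
      linarith
  termination_by F G => sizeL F + sizeL G
  decreasing_by
    all_goals simp only [sizeL_append, sizeL_cons, sizeL_nil, size_node]
    all_goals omega

theorem fdist_eq_dp (c : Cost α) (hnn : Nonneg c) (hse : SelfEq c) (htr : Triangle c)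
    (F G : Forest α) : fdist c F G = dp c F G :=
  le_antisymm (fdist_le_dp c hnn hse F G) (dp_le_fdist c hnn hse htr F G)

end Equality

/-! ### Section 8: rightmost leaves and subforests -/

section Subforest
variable {α : Type}
open PTree

mutual
theorem rlIdx_size : ∀ t : PTree α, rlIdx t = size t
  | PTree.node a cs => by
    rw [rlIdx, rlGo_size cs 1, size_node, Nat.add_comm]
  termination_by t => sizeOf t

theorem rlGo_size : ∀ (cs : List (PTree α)) (acc : ℕ), rlGo acc cs = acc + sizeL cs
  | [], acc => by rw [rlGo, sizeL_nil]; omega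
  | [t], acc => by
    rw [rlGo, rlIdx_size t, sizeL_cons, sizeL_nil]
    omega
  | t :: t' :: ts, acc => by
    rw [rlGo, rlGo_size (t' :: ts) (acc + size t)]
    · simp only [sizeL_cons]
      omega
    · simp
  termination_by cs _ => sizeOf cs
end

theorem rlAt_eq (F : Forest α) (i : ℕ) (t : PTree α) (h : treeAt F i = some t) :
    rlAt F i = i + size t - 1 := by
  rw [rlAt, h]
  show i + rlIdx t - 1 = i + size t - 1
  rw [rlIdx_size]

theorem subAux_nil (i j k : ℕ) : subAux ([] : Forest α) i j k = ([], k) := by rw [subAux]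

theorem subAux_cons (a : α) (cs ts : Forest α) (i j k : ℕ) :
    subAux (PTree.node a cs :: ts) i j k =
      if k + 1 > j then ([], k + 1)
      else if k + 1 ≥ i then
        (PTree.node a (subAux cs i j (k + 1)).1 ::
            (subAux ts i j (subAux cs i j (k + 1)).2).1,
          (subAux ts i j (subAux cs i j (k + 1)).2).2)
      else
        ((subAux cs i j (k + 1)).1 ++ (subAux ts i j (subAux cs i j (k + 1)).2).1,
          (subAux ts i j (subAux cs i j (k + 1)).2).2) := by
  rw [subAux]

theorem subAux_past (F : Forest α) (i j k : ℕ) (h : j ≤ k) :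
    (subAux F i j k).1 = [] ∧ j ≤ (subAux F i j k).2 := by
  cases F with
  | nil => rw [subAux_nil]; exact ⟨rfl, h⟩
  | cons t ts =>
    cases t with
    | node a cs =>
      rw [subAux_cons, if_pos (by omega)]
      exact ⟨rfl, by omega⟩

theorem subAux_snd : ∀ (F : Forest α) (i j k : ℕ), k + sizeL F ≤ j →
    (subAux F i j k).2 = k + sizeL F
  | [], i, j, k, h => by rw [subAux_nil, sizeL_nil]; simp
  | PTree.node a cs :: ts, i, j, k, h => by
    have hsz : size (PTree.node a cs) = 1 + sizeL cs := size_node a cs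
    rw [sizeL_cons] at h
    have hP : (subAux cs i j (k + 1)).2 = k + 1 + sizeL cs :=
      subAux_snd cs i j (k + 1) (by omega)
    have hQ : (subAux ts i j (subAux cs i j (k + 1)).2).2 =
        k + size (PTree.node a cs) + sizeL ts := by
      rw [hP]
      rw [subAux_snd ts i j (k + 1 + sizeL cs) (by omega)]
      omega
    rw [subAux_cons, sizeL_cons]
    rw [if_neg (by omega)]
    by_cases h2 : k + 1 ≥ i
    · rw [if_pos h2]
      rw [hQ]
      omega
    · rw [if_neg h2]
      rw [hQ]
      omega
  termination_by F _ _ _ => sizeOf F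

theorem subAux_snd_ge : ∀ (F : Forest α) (i j k : ℕ), j ≤ k + sizeL F →
    j ≤ (subAux F i j k).2
  | [], i, j, k, h => by rw [subAux_nil]; rw [sizeL_nil] at h; omega
  | PTree.node a cs :: ts, i, j, k, h => by
    have hsz : size (PTree.node a cs) = 1 + sizeL cs := size_node a cs
    rw [sizeL_cons] at h
    rw [subAux_cons]
    by_cases h1 : k + 1 > j
    · rw [if_pos h1]
      simp
      omega
    · rw [if_neg h1]
      have hPQ : j ≤ (subAux ts i j (subAux cs i j (k + 1)).2).2 := by
        by_cases h2 : j ≤ k + 1 + sizeL cs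
        · have hP := subAux_snd_ge cs i j (k + 1) h2
          have hP2 : j ≤ (subAux cs i j (k + 1)).2 + sizeL ts := by omega
          exact subAux_snd_ge ts i j _ hP2
        · have hP := subAux_snd cs i j (k + 1) (by omega)
          apply subAux_snd_ge ts i j _
          rw [hP]
          omega
      by_cases h2 : k + 1 ≥ i
      · rw [if_pos h2]
        exact hPQ
      · rw [if_neg h2]
        exact hPQ
  termination_by F _ _ _ => sizeOf F

theorem subAux_full : ∀ (F : Forest α) (i j k : ℕ), i ≤ k + 1 → k + sizeL F ≤ j →
    (subAux F i j k).1 = F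
  | [], i, j, k, h1, h2 => by rw [subAux_nil]
  | PTree.node a cs :: ts, i, j, k, h1, h2 => by
    have hsz : size (PTree.node a cs) = 1 + sizeL cs := size_node a cs
    rw [sizeL_cons] at h2
    rw [subAux_cons, if_neg (by omega), if_pos (by omega)]
    have hP : (subAux cs i j (k + 1)).1 = cs := subAux_full cs i j (k + 1) (by omega) (by omega)
    have hP2 : (subAux cs i j (k + 1)).2 = k + 1 + sizeL cs := subAux_snd cs i j (k + 1) (by omega)
    have hQ : (subAux ts i j (subAux cs i j (k + 1)).2).1 = ts := by
      rw [hP2]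
      exact subAux_full ts i j _ (by omega) (by omega)
    rw [hP, hQ]
  termination_by F _ _ _ => sizeOf F

theorem subAux_before : ∀ (F : Forest α) (i j k : ℕ), k + sizeL F < i → k + sizeL F ≤ j →
    (subAux F i j k).1 = [] ∧ (subAux F i j k).2 = k + sizeL F
  | [], i, j, k, h1, h2 => by rw [subAux_nil, sizeL_nil]; exact ⟨rfl, rfl⟩
  | PTree.node a cs :: ts, i, j, k, h1, h2 => by
    have hsz : size (PTree.node a cs) = 1 + sizeL cs := size_node a cs
    rw [sizeL_cons] at h1 h2
    obtain ⟨hP1, hP2⟩ := subAux_before cs i j (k + 1) (by omega) (by omega)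
    rw [subAux_cons, if_neg (by omega), if_neg (by omega)]
    rw [hP2]
    obtain ⟨hQ1, hQ2⟩ := subAux_before ts i j (k + 1 + sizeL cs) (by omega) (by omega)
    rw [hP1, hQ1, hQ2, sizeL_cons]
    exact ⟨rfl, by omega⟩
  termination_by F _ _ _ => sizeOf F

theorem subtrees_index_size : ∀ (F : Forest α) (n : ℕ) (t : PTree α),
    (subtreesL F)[n]? = some t → n + size t ≤ sizeL F
  | [], n, t, h => by rw [subtreesL_nil] at h; simp at h
  | PTree.node a cs :: ts, n, t, h => by
    have hsz : size (PTree.node a cs) = 1 + sizeL cs := size_node a cs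
    rw [subtreesL_cons, subtreesT_node] at h
    rw [sizeL_cons]
    rcases Nat.lt_or_ge n (sizeL cs + 1) with hn | hn
    · rw [List.getElem?_append_left (by simp [length_subtreesL]; omega)] at h
      cases n with
      | zero =>
        rw [List.getElem?_cons_zero] at h
        injection h with h
        subst h
        omega
      | succ m =>
        rw [List.getElem?_cons_succ] at h
        have := subtrees_index_size cs m t h
        omega
    · rw [List.getElem?_append_right (by simp [length_subtreesL]; omega)] at h
      have hlen : (PTree.node a cs :: subtreesL cs).length = 1 + sizeL cs := by
        simp [length_subtreesL]
        omega
      rw [hlen] at h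
      have := subtrees_index_size ts (n - (1 + sizeL cs)) t h
      omega
  termination_by F _ _ => sizeOf F

theorem subAux_main : ∀ (F : Forest α) (k n : ℕ) (t : PTree α),
    (subtreesL F)[n]? = some t →
      (subAux F (k + n + 1) (k + n + size t) k).1 = [t] ∧
      (subAux F (k + n + 2) (k + n + size t) k).1 = t.children
  | [], k, n, t, h => by rw [subtreesL_nil] at h; simp at h
  | PTree.node a cs :: ts, k, n, t, h => by
    have hsz : size (PTree.node a cs) = 1 + sizeL cs := size_node a cs
    have hst := size_pos t
    rw [subtreesL_cons, subtreesT_node] at h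
    rcases Nat.lt_or_ge n (sizeL cs + 1) with hn | hn
    · rw [List.getElem?_append_left (by simp [length_subtreesL]; omega)] at h
      cases n with
      | zero =>
        rw [List.getElem?_cons_zero] at h
        injection h with h
        subst h
        constructor
        · rw [subAux_cons, if_neg (by omega), if_pos (by omega)]
          have hP : (subAux cs (k + 0 + 1) (k + 0 + size (PTree.node a cs)) (k + 1)).1 = cs :=
            subAux_full cs _ _ _ (by omega) (by omega)
          have hP2 : (subAux cs (k + 0 + 1) (k + 0 + size (PTree.node a cs)) (k + 1)).2 =
              k + 1 + sizeL cs := subAux_snd cs _ _ _ (by omega)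
          obtain ⟨hQ, -⟩ := subAux_past ts (k + 0 + 1) (k + 0 + size (PTree.node a cs))
            ((subAux cs (k + 0 + 1) (k + 0 + size (PTree.node a cs)) (k + 1)).2)
            (by rw [hP2]; omega)
          rw [hP, hQ]
        · rw [subAux_cons, if_neg (by omega), if_neg (by omega)]
          have hP : (subAux cs (k + 0 + 2) (k + 0 + size (PTree.node a cs)) (k + 1)).1 = cs :=
            subAux_full cs _ _ _ (by omega) (by omega)
          have hP2 : (subAux cs (k + 0 + 2) (k + 0 + size (PTree.node a cs)) (k + 1)).2 =
              k + 1 + sizeL cs := subAux_snd cs _ _ _ (by omega)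
          obtain ⟨hQ, -⟩ := subAux_past ts (k + 0 + 2) (k + 0 + size (PTree.node a cs))
            ((subAux cs (k + 0 + 2) (k + 0 + size (PTree.node a cs)) (k + 1)).2)
            (by rw [hP2]; omega)
          rw [hP, hQ, List.append_nil]
          rfl
      | succ m =>
        rw [List.getElem?_cons_succ] at h
        have hsuf := subtrees_index_size cs m t h
        obtain ⟨ih1, ih2⟩ := subAux_main cs (k + 1) m t h
        constructor
        · rw [subAux_cons, if_neg (by omega), if_neg (by omega)]
          have hP1 : (subAux cs (k + (m + 1) + 1) (k + (m + 1) + size t) (k + 1)).1 = [t] := by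
            rw [show k + (m + 1) + 1 = k + 1 + m + 1 by omega,
              show k + (m + 1) + size t = k + 1 + m + size t by omega]
            exact ih1
          have hP2 : k + (m + 1) + size t ≤
              (subAux cs (k + (m + 1) + 1) (k + (m + 1) + size t) (k + 1)).2 :=
            subAux_snd_ge cs _ _ _ (by omega)
          obtain ⟨hQ, -⟩ := subAux_past ts (k + (m + 1) + 1) (k + (m + 1) + size t) _ hP2
          rw [hP1, hQ, List.append_nil]
        · rw [subAux_cons, if_neg (by omega), if_neg (by omega)]
          have hP1 : (subAux cs (k + (m + 1) + 2) (k + (m + 1) + size t) (k + 1)).1 =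
              t.children := by
            rw [show k + (m + 1) + 2 = k + 1 + m + 2 by omega,
              show k + (m + 1) + size t = k + 1 + m + size t by omega]
            exact ih2
          have hP2 : k + (m + 1) + size t ≤
              (subAux cs (k + (m + 1) + 2) (k + (m + 1) + size t) (k + 1)).2 :=
            subAux_snd_ge cs _ _ _ (by omega)
          obtain ⟨hQ, -⟩ := subAux_past ts (k + (m + 1) + 2) (k + (m + 1) + size t) _ hP2
          rw [hP1, hQ, List.append_nil]
    · rw [List.getElem?_append_right (by simp [length_subtreesL]; omega)] at h
      have hlen : (PTree.node a cs :: subtreesL cs).length = 1 + sizeL cs := by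
        simp [length_subtreesL]
        omega
      rw [hlen] at h
      set m := n - (1 + sizeL cs) with hm
      obtain ⟨ih1, ih2⟩ := subAux_main ts (k + size (PTree.node a cs)) m t h
      have hkey : k + size (PTree.node a cs) + m = k + n := by omega
      constructor
      · rw [subAux_cons, if_neg (by omega), if_neg (by omega)]
        obtain ⟨hP1, hP2⟩ := subAux_before cs (k + n + 1) (k + n + size t) (k + 1)
          (by omega) (by omega)
        rw [hP1, hP2]
        rw [show k + 1 + sizeL cs = k + size (PTree.node a cs) by omega]
        rw [show k + n + 1 = k + size (PTree.node a cs) + m + 1 by omega,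
          show k + n + size t = k + size (PTree.node a cs) + m + size t by omega]
        rw [ih1]
        rfl
      · rw [subAux_cons, if_neg (by omega), if_neg (by omega)]
        obtain ⟨hP1, hP2⟩ := subAux_before cs (k + n + 2) (k + n + size t) (k + 1)
          (by omega) (by omega)
        rw [hP1, hP2]
        rw [show k + 1 + sizeL cs = k + size (PTree.node a cs) by omega]
        rw [show k + n + 2 = k + size (PTree.node a cs) + m + 2 by omega,
          show k + n + size t = k + size (PTree.node a cs) + m + size t by omega]
        rw [ih2]
        rfl
  termination_by F _ _ _ => sizeOf F

theorem subforest_self (F : Forest α) (i : ℕ) (t : PTree α) (h : treeAt F i = some t)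
    (hi : 1 ≤ i) : subforest F i (i + size t - 1) = [t] := by
  rw [treeAt_eq] at h
  have := (subAux_main F 0 (i - 1) t h).1
  rw [subforest]
  rw [show 0 + (i - 1) + 1 = i by omega, show 0 + (i - 1) + size t = i + size t - 1 by
    have := size_pos t; omega] at this
  exact this

theorem subforest_children (F : Forest α) (i : ℕ) (t : PTree α) (h : treeAt F i = some t)
    (hi : 1 ≤ i) : subforest F (i + 1) (i + size t - 1) = t.children := by
  rw [treeAt_eq] at h
  have := (subAux_main F 0 (i - 1) t h).2
  rw [subforest]
  rw [show 0 + (i - 1) + 2 = i + 1 by omega, show 0 + (i - 1) + size t = i + size t - 1 by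
    have := size_pos t; omega] at this
  exact this

end Subforest

/-- The recurrence for the tree edit distance between subtrees:
`d_c(x̄_i, ȳ_j)` decomposes into deletion, insertion and replacement options over the
corresponding subforests. -/
theorem ted_decomposition {α : Type} (c : Cost α) (hnn : Nonneg c) (hse : SelfEq c)
    (htr : Triangle c) (F G : Forest α) (hF : F ≠ []) (hG : G ≠ [])
    (i : ℕ) (hi1 : 1 ≤ i) (hi2 : i ≤ fsize F)
    (j : ℕ) (hj1 : 1 ≤ j) (hj2 : j ≤ fsize G)
    (tx : PTree α) (htx : treeAt F i = some tx)
    (ty : PTree α) (hty : treeAt G j = some ty) :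
    ted c tx ty =
      min (c (labelAt F i) none +
            fdist c (subforest F (i + 1) (rlAt F i)) (subforest G j (rlAt G j)))
        (min (c none (labelAt G j) +
            fdist c (subforest F i (rlAt F i)) (subforest G (j + 1) (rlAt G j)))
          (c (labelAt F i) (labelAt G j) +
            fdist c (subforest F (i + 1) (rlAt F i)) (subforest G (j + 1) (rlAt G j)))) := by
  cases tx with
  | node x csx =>
    cases ty with
    | node y csy =>
      have hlF : labelAt F i = some x := by rw [labelAt, htx]; rfl
      have hlG : labelAt G j = some y := by rw [labelAt, hty]; rfl
      have hrF : rlAt F i = i + size (PTree.node x csx) - 1 := rlAt_eq F i _ htx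
      have hrG : rlAt G j = j + size (PTree.node y csy) - 1 := rlAt_eq G j _ hty
      have hsF1 : subforest F i (rlAt F i) = [PTree.node x csx] := by
        rw [hrF]
        exact subforest_self F i _ htx hi1
      have hsF2 : subforest F (i + 1) (rlAt F i) = csx := by
        rw [hrF]
        exact subforest_children F i _ htx hi1
      have hsG1 : subforest G j (rlAt G j) = [PTree.node y csy] := by
        rw [hrG]
        exact subforest_self G j _ hty hj1
      have hsG2 : subforest G (j + 1) (rlAt G j) = csy := by
        rw [hrG]
        exact subforest_children G j _ hty hj1
      rw [hlF, hlG, hsF1, hsF2, hsG1, hsG2, ted]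
      rw [fdist_eq_dp c hnn hse htr [PTree.node x csx] [PTree.node y csy],
        fdist_eq_dp c hnn hse htr csx [PTree.node y csy],
        fdist_eq_dp c hnn hse htr [PTree.node x csx] csy,
        fdist_eq_dp c hnn hse htr csx csy,
        dp_cons_cons c x y csx csy [] []]
      rw [List.append_nil, List.append_nil, dp_nil_nil, add_zero]

end TED
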